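/- arXiv:2004.07167 — 9 statements merged into one kernel-verified Lean document; each statement's English description precedes it below -/
import Mathlib

section
/- Let G be a finite group acting faithfully and transitively on a finite set Ω such that every normal 2-subgroup of G is trivial (i.e. O_2(G) = 1) and such that the stabiliser G_ω of a point ω ∈ Ω is a 2-group. Then the minimal degree of G on Ω is at least 2|Ω|/3; that is, for every g ∈ G with g ≠ 1, one has 3·|supp_Ω(g)| ≥ 2·|Ω|. -/
/-!
Proof outline: reduce to an involution `t`; either `t` inverts a nontrivial element of odd
order (then an orbit-counting argument along the free action of the cyclic group it generates
gives `fix(t) ≤ |Ω|/3`), or every product of two conjugates of `t` is a 2-element, in which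
case an elementary proof of the Baer–Suzuki theorem for involutions produces a nontrivial
normal 2-subgroup, contradicting `O₂(G) = 1`.
-/

open Subgroup

namespace MinDeg

universe u

variable {G : Type*} [Group G]

variable {G : Type*} [Group G]

lemma inv_eq_self_of_sq {t : G} (ht : t * t = 1) : t⁻¹ = t := by
  exact mul_eq_one_iff_inv_eq.mp ht

/-- Dihedral lemma: two "involutions" (allowing 1) whose product has 2-power order
generate a 2-group. -/
lemma dih_isPGroup {t s : G} (ht : t * t = 1) (hs : s * s = 1)
    (h : ∃ k : ℕ, (t * s) ^ (2 : ℕ) ^ k = 1) :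
    IsPGroup 2 (closure ({t, s} : Set G)) := by
  obtain ⟨k, hk⟩ := h
  set u := t * s with hu
  have htinv : t⁻¹ = t := inv_eq_self_of_sq ht
  have hsinv : s⁻¹ = s := inv_eq_self_of_sq hs
  have hconj : t * u * t⁻¹ = u⁻¹ := by
    rw [hu, mul_inv_rev, hsinv, htinv, ← mul_assoc, ht, one_mul]
  have hA : ∀ i : ℤ, t * u ^ i = u ^ (-i) * t := by
    intro i
    have : t * u ^ i * t⁻¹ = (t * u * t⁻¹) ^ i := (conj_zpow).symm
    rw [hconj, inv_zpow, ← zpow_neg] at this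
    calc t * u ^ i = t * u ^ i * t⁻¹ * t := by rw [inv_mul_cancel_right]
    _ = u ^ (-i) * t := by rw [this]
  have hP : ∀ x ∈ closure ({t, s} : Set G), ∃ i : ℤ, x = u ^ i ∨ x = u ^ i * t := by
    intro x hx
    induction hx using closure_induction with
    | mem x hxm =>
      rcases hxm with h1 | h2
      · exact ⟨0, Or.inr (by rw [h1, zpow_zero, one_mul])⟩
      · refine ⟨-1, Or.inr ?_⟩
        have : s = t * u := by rw [hu, ← mul_assoc, ht, one_mul]
        rw [h2, this]
        rw [show t * u = t * u ^ (1:ℤ) by rw [zpow_one], hA]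
    | one => exact ⟨0, Or.inl (by rw [zpow_zero])⟩
    | mul x y _ _ hx hy =>
      obtain ⟨i, hi⟩ := hx
      obtain ⟨j, hj⟩ := hy
      rcases hi with hi | hi <;> rcases hj with hj | hj
      · exact ⟨i + j, Or.inl (by rw [hi, hj, zpow_add])⟩
      · exact ⟨i + j, Or.inr (by rw [hi, hj, ← mul_assoc, ← zpow_add])⟩
      · refine ⟨i - j, Or.inr ?_⟩
        rw [hi, hj, mul_assoc, hA j, ← mul_assoc, ← zpow_add, sub_eq_add_neg]
      · refine ⟨i - j, Or.inl ?_⟩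
        rw [hi, hj]
        calc u ^ i * t * (u ^ j * t) = u ^ i * (t * u ^ j) * t := by group
        _ = u ^ i * (u ^ (-j) * t) * t := by rw [hA]
        _ = u ^ i * u ^ (-j) * (t * t) := by group
        _ = u ^ (i - j) := by rw [ht, mul_one, ← zpow_add, sub_eq_add_neg]
    | inv x _ hx =>
      obtain ⟨i, hi⟩ := hx
      rcases hi with hi | hi
      · exact ⟨-i, Or.inl (by rw [hi, ← zpow_neg])⟩
      · refine ⟨i, Or.inr ?_⟩
        rw [hi, mul_inv_rev, htinv, ← zpow_neg, hA, neg_neg]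
  intro x
  obtain ⟨i, hi⟩ := hP x.1 x.2
  have hunat : u ^ ((((2:ℕ) ^ k : ℕ)) : ℤ) = 1 := by
    rw [zpow_natCast]; exact hk
  have hord : ∀ m : ℤ, ((((2:ℕ)^k : ℕ)) : ℤ) ∣ m → u ^ m = 1 := by
    intro m hm
    obtain ⟨c, rfl⟩ := hm
    rw [zpow_mul, hunat, one_zpow]
  refine ⟨k + 1, ?_⟩
  apply Subtype.ext
  rw [SubmonoidClass.coe_pow]
  simp only [OneMemClass.coe_one]
  rcases hi with hi | hi
  · rw [hi, ← zpow_natCast, ← zpow_mul]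
    apply hord
    refine ⟨i * 2, ?_⟩
    push_cast
    ring
  · have hx2 : (x : G) * (x : G) = 1 := by
      rw [hi]
      calc u ^ i * t * (u ^ i * t) = u ^ i * (t * u ^ i) * t := by group
      _ = u ^ i * (u ^ (-i) * t) * t := by rw [hA]
      _ = u ^ i * u ^ (-i) * (t * t) := by group
      _ = 1 := by rw [ht, mul_one, ← zpow_add, add_neg_cancel, zpow_zero]
    have : (x : G) ^ (2:ℕ) = 1 := by rw [pow_two, hx2]
    calc (x:G) ^ (2:ℕ)^(k+1) = ((x:G) ^ (2:ℕ)) ^ (2:ℕ)^k := by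
          rw [← pow_mul, pow_succ, mul_comm ((2:ℕ)^k) 2]
    _ = 1 := by rw [this, one_pow]

lemma card_lt_of_lt [Finite G] {H K : Subgroup G} (h : H < K) : Nat.card H < Nat.card K := by
  have h1 : Nat.card H = (H : Set G).ncard := Nat.card_coe_set_eq (H : Set G)
  have h2 : Nat.card K = (K : Set G).ncard := Nat.card_coe_set_eq (K : Set G)
  rw [h1, h2]
  exact Set.ncard_lt_ncard (by exact_mod_cast h) (Set.toFinite _)

lemma eq_of_le_of_card_le [Finite G] {H K : Subgroup G} (h : H ≤ K)
    (hc : Nat.card K ≤ Nat.card H) : H = K := by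
  by_contra hne
  exact absurd (card_lt_of_lt (lt_of_le_of_ne h hne)) (by omega)

lemma conj_map_eq {N : Subgroup G} (hN : N.Normal) (g : G) :
    Subgroup.map (MulAut.conj g).toMonoidHom N = N := by
  ext y
  simp only [Subgroup.mem_map, MulEquiv.coe_toMonoidHom, MulAut.conj_apply]
  constructor
  · rintro ⟨n, hn, rfl⟩
    exact hN.conj_mem n hn g
  · intro hy
    exact ⟨g⁻¹ * y * g, by simpa using hN.conj_mem y hy g⁻¹, by group⟩

lemma sup_normal {N M : Subgroup G} (hN : N.Normal) (hM : M.Normal) : (N ⊔ M).Normal := by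
  constructor
  intro x hx g
  have : g * x * g⁻¹ ∈ Subgroup.map (MulAut.conj g).toMonoidHom (N ⊔ M) :=
    ⟨x, hx, by simp⟩
  rwa [Subgroup.map_sup, conj_map_eq hN, conj_map_eq hM] at this

/-- From pointwise membership in normal 2-subgroups, get one normal 2-subgroup containing all. -/
lemma exists_normal_pgroup_of_forall [Finite G] (s : Finset G)
    (h : ∀ x ∈ s, ∃ N : Subgroup G, N.Normal ∧ IsPGroup 2 N ∧ x ∈ N) :
    ∃ N : Subgroup G, N.Normal ∧ IsPGroup 2 N ∧ ∀ x ∈ s, x ∈ N := by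
  classical
  induction s using Finset.induction_on with
  | empty => exact ⟨⊥, inferInstance, IsPGroup.of_bot, by simp⟩
  | @insert a s ha ih =>
    obtain ⟨N, hN, hN2, hNall⟩ := ih (fun x hx => h x (Finset.mem_insert_of_mem hx))
    obtain ⟨M, hM, hM2, haM⟩ := h a (Finset.mem_insert_self a s)
    haveI := hN
    refine ⟨M ⊔ N, sup_normal hM hN, IsPGroup.to_sup_of_normal_right hM2 hN2, ?_⟩
    intro x hx
    rcases Finset.mem_insert.mp hx with rfl | hx
    · exact Subgroup.mem_sup_left haM
    · exact Subgroup.mem_sup_right (hNall x hx)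

/-- In a finite 2-group `R`, a proper subgroup `D` lies in a proper subgroup that is
normalized by all of `R`. -/
lemma exists_proper_normalized [Finite G] :
    ∀ n : ℕ, ∀ (R D : Subgroup G), Nat.card R - Nat.card D ≤ n →
    IsPGroup 2 R → D < R →
    ∃ M : Subgroup G, D ≤ M ∧ M < R ∧ ∀ r ∈ R, ∀ m ∈ M, r * m * r⁻¹ ∈ M := by
  intro n
  induction n with
  | zero =>
    intro R D hn h2 hDR
    exact absurd (card_lt_of_lt hDR) (by omega)
  | succ n ih =>
    intro R D hn h2 hDR
    by_cases hnorm : ∀ r ∈ R, ∀ d ∈ D, r * d * r⁻¹ ∈ D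
    · exact ⟨D, le_rfl, hDR, hnorm⟩
    · haveI : Fact (Nat.Prime 2) := ⟨Nat.prime_two⟩
      haveI hnil : Group.IsNilpotent ↥R := h2.isNilpotent
      have NC : NormalizerCondition ↥R := normalizerCondition_of_isNilpotent
      set D' : Subgroup ↥R := D.subgroupOf R with hD'
      have hD'top : D' < ⊤ := by
        rcases SetLike.exists_of_lt hDR with ⟨r, hrR, hrD⟩
        refine lt_top_iff_ne_top.mpr (fun htop => hrD ?_)
        have : (⟨r, hrR⟩ : ↥R) ∈ D' := htop ▸ Subgroup.mem_top _
        exact (Subgroup.mem_subgroupOf).mp this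
      obtain ⟨u, huN, huD⟩ := SetLike.exists_of_lt (NC D' hD'top)
      have hu0R : (u : G) ∈ R := u.2
      have hu0D : (u : G) ∉ D := fun hc => huD (Subgroup.mem_subgroupOf.mpr hc)
      have hu0conj : ∀ d ∈ D, (u : G) * d * (u : G)⁻¹ ∈ D := by
        intro d hd
        have hdR : d ∈ R := hDR.le hd
        have : (⟨d, hdR⟩ : ↥R) ∈ D' := Subgroup.mem_subgroupOf.mpr hd
        have := (Subgroup.mem_normalizer_iff.mp huN ⟨d, hdR⟩).mp this
        exact Subgroup.mem_subgroupOf.mp this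
      -- upgrade to an "iff" normalizing statement by finiteness
      have hu0conj' : ∀ d, (u : G) * d * (u : G)⁻¹ ∈ D → d ∈ D := by
        intro d hd
        let f : ↥D → ↥D := fun x => ⟨(u : G) * x * (u : G)⁻¹, hu0conj _ x.2⟩
        have hinj : Function.Injective f := by
          intro a b hab
          have : ((u:G) * a * (u:G)⁻¹ : G) = (u:G) * b * (u:G)⁻¹ := congrArg Subtype.val hab
          ext
          exact mul_left_cancel (mul_right_cancel this)
        have hsurj := Finite.surjective_of_injective hinj
        obtain ⟨⟨e, he⟩, hfe⟩ := hsurj ⟨(u : G) * d * (u : G)⁻¹, hd⟩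
        have : ((u:G) * e * (u:G)⁻¹ : G) = (u:G) * d * (u:G)⁻¹ := congrArg Subtype.val hfe
        have : e = d := mul_left_cancel (mul_right_cancel this)
        exact this ▸ he
      set D₁ : Subgroup G := (normalizer (D : Set G)) ⊓ R with hD₁
      have hDD₁ : D ≤ D₁ := le_inf Subgroup.le_normalizer hDR.le
      have hu0D₁ : (u : G) ∈ D₁ := by
        refine ⟨Subgroup.mem_normalizer_iff.mpr (fun h => ⟨fun hh => hu0conj h hh, fun hh => ?_⟩), hu0R⟩
        -- h with u h u⁻¹ ∈ D ⇒ h ∈ D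
        exact hu0conj' h hh
      have hD₁R : D₁ < R := by
        push_neg at hnorm
        obtain ⟨r, hrR, d, hd, hrd⟩ := hnorm
        refine lt_of_le_of_ne inf_le_right (fun heq => hrd ?_)
        have hrD₁ : r ∈ D₁ := heq ▸ hrR
        have := Subgroup.mem_normalizer_iff.mp hrD₁.1
        exact (this d).mp hd
      have hltD₁ : D < D₁ := lt_of_le_of_ne hDD₁ (fun heq => hu0D (heq ▸ hu0D₁))
      have hcard : Nat.card R - Nat.card D₁ ≤ n := by
        have h1 := card_lt_of_lt hltD₁
        have h2' := card_lt_of_lt hD₁R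
        omega
      obtain ⟨M, hM1, hM2, hM3⟩ := ih R D₁ hcard h2 hD₁R
      exact ⟨M, le_trans hDD₁ hM1, hM2, hM3⟩

/-- Key lemma (SP): in a finite 2-group `R` generated by a conjugation-closed set `X`,
for a proper subgroup `D` generated by `X ∩ D`, some element of `X` outside `D`
normalizes `D`. -/
lemma SP [Finite G] :
    ∀ n : ℕ, ∀ (R D : Subgroup G) (X : Set G), Nat.card R ≤ n →
    IsPGroup 2 R → X ⊆ (R : Set G) → (∀ x ∈ X, ∀ r ∈ R, r * x * r⁻¹ ∈ X) →
    closure X = R → closure (X ∩ (D : Set G)) = D → D < R →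
    ∃ x ∈ X, x ∉ D ∧ ∀ d ∈ D, x * d * x⁻¹ ∈ D := by
  intro n
  induction n with
  | zero =>
    intro R D X hn _ _ _ _ _ _
    have := Nat.card_pos (α := ↥R)
    omega
  | succ n ih =>
    intro R D X hn h2 hXR hXconj hXgen hDgen hDR
    obtain ⟨M, hDM, hMR, hMconj⟩ := exists_proper_normalized (Nat.card R) R D (Nat.sub_le _ _) h2 hDR
    by_cases hXM : X ∩ (M : Set G) ⊆ (D : Set G)
    · -- case B
      have hXnotM : ¬ X ⊆ (M : Set G) := by
        intro hsub
        have : R ≤ M := hXgen ▸ closure_le M |>.mpr hsub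
        exact absurd (lt_of_le_of_lt this hMR) (lt_irrefl R)
      obtain ⟨x₀, hx₀X, hx₀M⟩ := Set.not_subset.mp hXnotM
      have hx₀D : x₀ ∉ D := fun hc => hx₀M (hDM hc)
      have hDM' : D = closure (X ∩ (M : Set G)) := by
        refine le_antisymm ?_ ((closure_le D).mpr hXM)
        calc D = closure (X ∩ (D : Set G)) := hDgen.symm
        _ ≤ closure (X ∩ (M : Set G)) :=
          closure_mono (Set.inter_subset_inter_right X (fun y hy => hDM hy))
      refine ⟨x₀, hx₀X, hx₀D, ?_⟩
      intro d hd
      rw [hDM'] at hd ⊢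
      induction hd using closure_induction with
      | mem y hy =>
        refine subset_closure ⟨hXconj y hy.1 x₀ (hXR hx₀X), ?_⟩
        exact hMconj x₀ (hXR hx₀X) y hy.2
      | one => simpa using (closure (X ∩ (M : Set G))).one_mem
      | mul a b _ _ hpa hpb =>
        have : x₀ * (a * b) * x₀⁻¹ = (x₀ * a * x₀⁻¹) * (x₀ * b * x₀⁻¹) := by group
        rw [this]
        exact mul_mem hpa hpb
      | inv a _ hpa =>
        have : x₀ * a⁻¹ * x₀⁻¹ = (x₀ * a * x₀⁻¹)⁻¹ := by group
        rw [this]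
        exact inv_mem hpa
    · -- case C
      obtain ⟨w, hwXM, hwD⟩ := Set.not_subset.mp hXM
      set R' : Subgroup G := closure (X ∩ (M : Set G)) with hR'
      have hR'M : R' ≤ M := (closure_le M).mpr Set.inter_subset_right
      have hR'R : R' < R := lt_of_le_of_lt hR'M hMR
      set X' : Set G := X ∩ (R' : Set G) with hX'
      have hXMsubR' : X ∩ (M : Set G) ⊆ (R' : Set G) := subset_closure
      have hcard : Nat.card R' ≤ n := by
        have := card_lt_of_lt hR'R
        omega
      have h2' : IsPGroup 2 R' := h2.to_le hR'R.le
      have hX'R' : X' ⊆ (R' : Set G) := Set.inter_subset_right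
      have hX'conj : ∀ x ∈ X', ∀ r ∈ R', r * x * r⁻¹ ∈ X' := by
        intro x hx r hr
        exact ⟨hXconj x hx.1 r (hR'R.le hr), mul_mem (mul_mem hr (hx.2 : x ∈ R')) (inv_mem hr)⟩
      have hX'gen : closure X' = R' := by
        refine le_antisymm ((closure_le R').mpr hX'R') ?_
        rw [hR']
        refine closure_mono ?_
        intro y hy
        exact ⟨hy.1, hXMsubR' hy⟩
      have hDR' : D ≤ R' := by
        calc D = closure (X ∩ (D : Set G)) := hDgen.symm
        _ ≤ closure (X ∩ (M : Set G)) :=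
          closure_mono (Set.inter_subset_inter_right X (fun y hy => hDM hy))
      have hDltR' : D < R' := by
        refine lt_of_le_of_ne hDR' (fun heq => hwD ?_)
        rw [heq]
        exact hXMsubR' hwXM
      have hD'gen : closure (X' ∩ (D : Set G)) = D := by
        have hset : X' ∩ (D : Set G) = X ∩ (D : Set G) := by
          apply Set.eq_of_subset_of_subset
          · exact Set.inter_subset_inter_left _ Set.inter_subset_left
          · intro y hy
            exact ⟨⟨hy.1, hDR' hy.2⟩, hy.2⟩
        rw [hset, hDgen]
      obtain ⟨x, hxX', hxD, hxconj⟩ := ih R' D X' hcard h2' hX'R' hX'conj hX'gen hD'gen hDltR'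
      exact ⟨x, hxX'.1, hxD, hxconj⟩

set_option maxHeartbeats 1000000 in
/-- **Baer–Suzuki theorem for involutions.** -/
theorem baer_suzuki_invol :
    ∀ n : ℕ, ∀ (G : Type u) (_ : Group G) (_ : Finite G), Nat.card G ≤ n →
    ∀ t : G, t * t = 1 → t ≠ 1 →
    (∀ g : G, ∃ k : ℕ, (t * (g * t * g⁻¹)) ^ (2:ℕ) ^ k = 1) →
    ∃ N : Subgroup G, N.Normal ∧ IsPGroup 2 N ∧ t ∈ N := by
  intro n
  induction n with
  | zero =>
    intro G _ _ hn t _ _ _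
    have := Nat.card_pos (α := G)
    omega
  | succ n ih =>
    intro G _ _ hn t ht2 ht1 hpair
    classical
    set C : Set G := Set.range (fun g : G => g * t * g⁻¹) with hC
    have htC : t ∈ C := ⟨1, by group⟩
    have hCconj : ∀ x ∈ C, ∀ g : G, g * x * g⁻¹ ∈ C := by
      rintro x ⟨a, rfl⟩ g
      exact ⟨g * a, by group⟩
    have hCinvol : ∀ x ∈ C, x * x = 1 := by
      rintro x ⟨a, rfl⟩
      calc a * t * a⁻¹ * (a * t * a⁻¹) = a * (t * t) * a⁻¹ := by group
      _ = 1 := by rw [ht2]; group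
    have hCne1 : ∀ x ∈ C, x ≠ 1 := by
      rintro x ⟨a, rfl⟩ hx
      simp only [] at hx
      apply ht1
      have h2 : a⁻¹ * (a * t * a⁻¹) * a = a⁻¹ * 1 * a := by rw [hx]
      calc t = a⁻¹ * (a * t * a⁻¹) * a := by group
      _ = 1 := by rw [h2]; group
    have hCpair : ∀ x ∈ C, ∀ y ∈ C, ∃ k : ℕ, (x * y) ^ (2:ℕ) ^ k = 1 := by
      rintro x ⟨a, rfl⟩ y ⟨b, rfl⟩
      obtain ⟨k, hk⟩ := hpair (a⁻¹ * b)
      refine ⟨k, ?_⟩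
      have hxy : (a * t * a⁻¹) * (b * t * b⁻¹) =
          a * (t * ((a⁻¹ * b) * t * (a⁻¹ * b)⁻¹)) * a⁻¹ := by group
      rw [hxy, conj_pow, hk, mul_one, mul_inv_cancel]
    have hCdih : ∀ x ∈ C, ∀ y ∈ C, IsPGroup 2 (closure ({x, y} : Set G)) :=
      fun x hx y hy => dih_isPGroup (hCinvol x hx) (hCinvol y hy) (hCpair x hx y hy)
    -- proper subgroups trap C into 2-groups
    have aux : ∀ K : Subgroup G, K ≠ ⊤ → IsPGroup 2 (closure (C ∩ (K : Set G))) := by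
      intro K hK
      have hcardK : Nat.card K ≤ n := by
        have hlt : K < ⊤ := lt_top_iff_ne_top.mpr hK
        have h1 := card_lt_of_lt hlt
        have htop : Nat.card (⊤ : Subgroup G) = Nat.card G :=
          Nat.card_congr Subgroup.topEquiv.toEquiv
        omega
      set S : Set ↥K := {x : ↥K | (x : G) ∈ C} with hS
      have hSfin : S.Finite := Set.toFinite S
      have hmem : ∀ x ∈ hSfin.toFinset, ∃ N : Subgroup ↥K, N.Normal ∧ IsPGroup 2 N ∧ x ∈ N := by
        intro x hx
        rw [Set.Finite.mem_toFinset] at hx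
        refine ih ↥K inferInstance inferInstance hcardK x (Subtype.ext (hCinvol _ hx)) ?_ ?_
        · intro hx1
          exact hCne1 _ hx (by rw [hx1]; rfl)
        · intro g
          obtain ⟨k, hk⟩ :=
            hCpair _ hx ((g : G) * (x : G) * (g : G)⁻¹) (hCconj _ hx (g : G))
          refine ⟨k, ?_⟩
          apply Subtype.ext
          push_cast
          exact hk
      obtain ⟨N, hNnorm, hN2, hNall⟩ := exists_normal_pgroup_of_forall hSfin.toFinset hmem
      have hle : closure S ≤ N :=
        (closure_le N).mpr (fun x hx => hNall x (Set.Finite.mem_toFinset hSfin |>.mpr hx))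
      have h2S : IsPGroup 2 (closure S) := hN2.to_le hle
      have hmap : (closure S).map K.subtype = closure (C ∩ (K : Set G)) := by
        rw [MonoidHom.map_closure]
        congr 1
        ext y
        constructor
        · rintro ⟨x, hx, rfl⟩
          exact ⟨hx, x.2⟩
        · rintro ⟨hyC, hyK⟩
          exact ⟨⟨y, hyK⟩, hyC, rfl⟩
      rw [← hmap]
      exact h2S.map K.subtype
    set H : Subgroup G := normalClosure {t} with hHdef
    have hHC : H = closure C := by
      rw [hHdef]
      show closure (Group.conjugatesOfSet {t}) = closure C
      congr 1
      ext x
      rw [Group.mem_conjugatesOfSet_iff]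
      constructor
      · rintro ⟨a, ha, hconj⟩
        rw [Set.mem_singleton_iff] at ha
        subst ha
        obtain ⟨c, rfl⟩ := isConj_iff.mp hconj
        exact ⟨c, rfl⟩
      · rintro ⟨c, rfl⟩
        exact ⟨t, rfl, isConj_iff.mpr ⟨c, rfl⟩⟩
    by_cases hHtop : H = ⊤
    swap
    · have h2H := aux H hHtop
      have hCH : C ∩ (H : Set G) = C := by
        refine Set.inter_eq_left.mpr ?_
        intro x hx
        rw [hHC]
        exact subset_closure hx
      rw [hCH, ← hHC] at h2H
      exact ⟨H, Subgroup.normalClosure_normal, h2H,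
        Subgroup.subset_normalClosure (Set.mem_singleton t)⟩
    have hGgen : closure C = ⊤ := by rw [← hHC]; exact hHtop
    by_cases hG2 : IsPGroup 2 G
    · exact ⟨⊤, inferInstance, hG2.to_subgroup ⊤, Subgroup.mem_top t⟩
    by_cases hN0 : ∃ N₀ : Subgroup G, N₀.Normal ∧ IsPGroup 2 N₀ ∧ N₀ ≠ ⊥
    · obtain ⟨N₀, hN₀n, hN₀2, hN₀ne⟩ := hN0
      haveI := hN₀n
      set φ := QuotientGroup.mk' N₀ with hφ
      have hsur := QuotientGroup.mk'_surjective N₀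
      have hcardQ : Nat.card (G ⧸ N₀) ≤ n := by
        have h1 := Subgroup.card_eq_card_quotient_mul_card_subgroup N₀
        have h2 : 1 < Nat.card N₀ := (Subgroup.one_lt_card_iff_ne_bot N₀).mpr hN₀ne
        have h3 : 0 < Nat.card (G ⧸ N₀) := Nat.card_pos
        have h4 : Nat.card (G ⧸ N₀) * 2 ≤ Nat.card (G ⧸ N₀) * Nat.card N₀ :=
          Nat.mul_le_mul_left _ h2
        omega
      by_cases htq : φ t = 1
      · refine ⟨N₀, hN₀n, hN₀2, ?_⟩
        rw [← QuotientGroup.ker_mk' N₀]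
        exact htq
      · have hpairQ : ∀ q : G ⧸ N₀, ∃ k : ℕ, (φ t * (q * φ t * q⁻¹)) ^ (2:ℕ) ^ k = 1 := by
          intro q
          obtain ⟨g, rfl⟩ := hsur q
          obtain ⟨k, hk⟩ := hpair g
          refine ⟨k, ?_⟩
          have heq : (φ t * (φ g * φ t * (φ g)⁻¹)) ^ (2:ℕ) ^ k =
              φ ((t * (g * t * g⁻¹)) ^ (2:ℕ) ^ k) := by
            rw [map_pow, map_mul, map_mul, map_mul, map_inv]
          rw [heq, hk, map_one]
        obtain ⟨Nb, hNbn, hNb2, htb⟩ := ih (G ⧸ N₀) inferInstance inferInstance hcardQ (φ t)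
          (by rw [← map_mul, ht2, map_one]) htq hpairQ
        refine ⟨Nb.comap φ, hNbn.comap φ, ?_, Subgroup.mem_comap.mpr htb⟩
        intro x
        obtain ⟨k, hk⟩ := hNb2 ⟨φ (x : G), Subgroup.mem_comap.mp x.2⟩
        have hk' : (φ (x : G)) ^ (2:ℕ) ^ k = 1 := by
          have := congrArg Subtype.val hk
          push_cast at this
          exact this
        have hker : ((x : G)) ^ (2:ℕ) ^ k ∈ N₀ := by
          have hφ1 : φ ((x : G) ^ (2:ℕ) ^ k) = 1 := by rw [map_pow]; exact hk'
          exact (QuotientGroup.eq_one_iff _).mp hφ1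
        obtain ⟨j, hj⟩ := hN₀2 ⟨_, hker⟩
        have hj' : (((x : G)) ^ (2:ℕ) ^ k) ^ (2:ℕ) ^ j = 1 := by
          have := congrArg Subtype.val hj
          push_cast at this
          exact this
        refine ⟨k + j, ?_⟩
        apply Subtype.ext
        push_cast
        rw [pow_add, pow_mul]
        exact hj'
    -- the kill: no nontrivial normal 2-subgroup, G = ⟨C⟩, G not a 2-group
    · exfalso
      have htriv : ∀ N : Subgroup G, N.Normal → IsPGroup 2 N → N = ⊥ := by
        intro N h1 h2
        by_contra hne
        exact hN0 ⟨N, h1, h2, hne⟩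
      set 𝓕 : Set (Subgroup G) :=
        {R | (C ∩ (R : Set G)).Nonempty ∧ R ≠ ⊤ ∧ R = closure (C ∩ (R : Set G))} with h𝓕
      have hselfgen : ∀ S : Set G, S ⊆ C →
          closure S = closure (C ∩ ((closure S : Subgroup G) : Set G)) := by
        intro S hSC
        refine le_antisymm ?_ ((closure_le _).mpr Set.inter_subset_right)
        refine (closure_le _).mpr ?_
        intro x hx
        exact subset_closure ⟨hSC hx, subset_closure hx⟩
      have hF2 : ∀ R ∈ 𝓕, IsPGroup 2 R := by
        intro R hR
        have := aux R hR.2.1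
        rwa [← hR.2.2] at this
      have hFpair : ∀ x ∈ C, ∀ y ∈ C, closure ({x, y} : Set G) ∈ 𝓕 := by
        intro x hx y hy
        have hsub : ({x, y} : Set G) ⊆ C := by
          intro z hz
          rcases hz with rfl | hz
          · exact hx
          · rw [Set.mem_singleton_iff] at hz
            subst hz
            exact hy
        refine ⟨⟨x, hx, subset_closure (Set.mem_insert x _)⟩, ?_, hselfgen _ hsub⟩
        intro htop
        exact hG2 (IsPGroup.of_equiv (htop ▸ hCdih x hx y hy) Subgroup.topEquiv)
      have hmaxext : ∀ R ∈ 𝓕, ∃ R', R' ∈ 𝓕 ∧ R ≤ R' ∧ ∀ R'' ∈ 𝓕, R' ≤ R'' → R'' = R' := by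
        intro R hR
        obtain ⟨R', hR'mem, hR'max⟩ :=
          Set.Finite.exists_maximalFor (fun A : Subgroup G => Nat.card A)
            {R'' | R'' ∈ 𝓕 ∧ R ≤ R''} (Set.toFinite _) ⟨R, hR, le_rfl⟩
        refine ⟨R', hR'mem.1, hR'mem.2, ?_⟩
        intro R'' hR'' hle
        have hcardle : Nat.card R' ≤ Nat.card R'' := Subgroup.card_le_of_le hle
        have heq := hR'max (j := R'') ⟨hR'', le_trans hR'mem.2 hle⟩ hcardle
        exact (eq_of_le_of_card_le hle heq).symm
      set 𝓜 : Set (Subgroup G) := {R | R ∈ 𝓕 ∧ ∀ R'' ∈ 𝓕, R ≤ R'' → R'' = R} with h𝓜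
      have htrap : ∀ R ∈ 𝓜, ∀ x ∈ C, x ∈ (normalizer (R : Set G)) → x ∈ R := by
        intro R hR x hx hxn
        have hRne : (normalizer (R : Set G)) ≠ ⊤ := by
          intro htop
          have hnorm : R.Normal := Subgroup.normalizer_eq_top_iff.mp htop
          have hbot := htriv R hnorm (hF2 R hR.1)
          obtain ⟨y, hyC, hyR⟩ := hR.1.1
          rw [hbot] at hyR
          exact hCne1 y hyC (Subgroup.mem_bot.mp hyR)
        set R'' := closure (C ∩ ((normalizer (R : Set G)) : Set G)) with hR''def
        have hR''F : R'' ∈ 𝓕 := by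
          refine ⟨?_, ?_, hselfgen _ Set.inter_subset_left⟩
          · obtain ⟨y, hyC, hyR⟩ := hR.1.1
            exact ⟨y, hyC, subset_closure ⟨hyC, Subgroup.le_normalizer hyR⟩⟩
          · intro htop
            apply hRne
            have hle : R'' ≤ (normalizer (R : Set G)) := (closure_le _).mpr Set.inter_subset_right
            exact top_le_iff.mp (htop ▸ hle)
        have hle : R ≤ R'' := by
          conv_lhs => rw [hR.1.2.2]
          exact closure_mono
            (Set.inter_subset_inter_right C (fun z hz => Subgroup.le_normalizer hz))
        have heq := hR.2 R'' hR''F hle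
        rw [← heq]
        exact subset_closure ⟨hx, hxn⟩
      by_cases huniq : ∀ y ∈ C, ∀ R₁ ∈ 𝓜, ∀ R₂ ∈ 𝓜, y ∈ R₁ → y ∈ R₂ → R₁ = R₂
      · obtain ⟨R₀, hR₀F, hR₀le, hR₀max⟩ := hmaxext _ (hFpair t htC t htC)
        have hR₀M : R₀ ∈ 𝓜 := ⟨hR₀F, hR₀max⟩
        have htR₀ : t ∈ R₀ := hR₀le (subset_closure (Set.mem_insert t _))
        have hCsub : ∀ y ∈ C, y ∈ R₀ := by
          intro y hy
          obtain ⟨Ry, hRyF, hRyle, hRymax⟩ := hmaxext _ (hFpair t htC y hy)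
          have hRyM : Ry ∈ 𝓜 := ⟨hRyF, hRymax⟩
          have htRy : t ∈ Ry := hRyle (subset_closure (Set.mem_insert t _))
          have heq := huniq t htC Ry hRyM R₀ hR₀M htRy htR₀
          rw [← heq]
          exact hRyle (subset_closure (Set.mem_insert_of_mem t rfl))
        have hto : (⊤ : Subgroup G) ≤ R₀ := by
          rw [← hGgen]
          exact (closure_le _).mpr (fun y hy => hCsub y hy)
        exact hR₀F.2.1 (top_le_iff.mp hto)
      · push_neg at huniq
        obtain ⟨y₀, hy₀C, Ra, hRaM, Rb, hRbM, hy₀a, hy₀b, hab⟩ := huniq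
        set 𝓟 : Set (Subgroup G × Subgroup G) :=
          {p | p.1 ∈ 𝓜 ∧ p.2 ∈ 𝓜 ∧ p.1 ≠ p.2 ∧
            (C ∩ (p.1 : Set G) ∩ (p.2 : Set G)).Nonempty} with h𝓟
        have h𝓟ne : 𝓟.Nonempty := ⟨(Ra, Rb), hRaM, hRbM, hab, ⟨y₀, ⟨hy₀C, hy₀a⟩, hy₀b⟩⟩
        obtain ⟨⟨R₁, R₂⟩, hPmem, hPmax⟩ := Set.Finite.exists_maximalFor
          (fun p : Subgroup G × Subgroup G =>
            Nat.card (closure (C ∩ (p.1 : Set G) ∩ (p.2 : Set G))))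
          𝓟 (Set.toFinite _) h𝓟ne
        obtain ⟨hR₁M, hR₂M, hR12, ⟨y₁, ⟨hy₁C, hy₁R₁⟩, hy₁R₂⟩⟩ := hPmem
        set D : Subgroup G := closure (C ∩ (R₁ : Set G) ∩ (R₂ : Set G)) with hD
        have hy₁D : y₁ ∈ D := subset_closure ⟨⟨hy₁C, hy₁R₁⟩, hy₁R₂⟩
        have hDR₁ : D ≤ R₁ := (closure_le _).mpr (fun z hz => hz.1.2)
        have hDR₂ : D ≤ R₂ := (closure_le _).mpr (fun z hz => hz.2)
        have hDltR₁ : D < R₁ := by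
          refine lt_of_le_of_ne hDR₁ (fun heq => ?_)
          have h12 : R₁ ≤ R₂ := heq ▸ hDR₂
          exact hR12 (hR₁M.2 R₂ hR₂M.1 h12).symm
        have hDltR₂ : D < R₂ := by
          refine lt_of_le_of_ne hDR₂ (fun heq => ?_)
          have h21 : R₂ ≤ R₁ := heq ▸ hDR₁
          exact hR12 (hR₂M.2 R₁ hR₁M.1 h21)
        have hLne : (normalizer (D : Set G)) ≠ ⊤ := by
          intro htop
          have hnorm : D.Normal := Subgroup.normalizer_eq_top_iff.mp htop
          have hbot := htriv D hnorm ((hF2 R₁ hR₁M.1).to_le hDR₁)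
          rw [hbot] at hy₁D
          exact hCne1 y₁ hy₁C (Subgroup.mem_bot.mp hy₁D)
        set W : Subgroup G := closure (C ∩ ((normalizer (D : Set G)) : Set G)) with hW
        have hWF : W ∈ 𝓕 := by
          refine ⟨⟨y₁, hy₁C, subset_closure ⟨hy₁C, Subgroup.le_normalizer hy₁D⟩⟩, ?_,
            hselfgen _ Set.inter_subset_left⟩
          intro htop
          apply hLne
          have hle : W ≤ (normalizer (D : Set G)) := (closure_le _).mpr Set.inter_subset_right
          exact top_le_iff.mp (htop ▸ hle)
        obtain ⟨R₃, hR₃F, hWR₃, hR₃max⟩ := hmaxext _ hWF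
        have hR₃M : R₃ ∈ 𝓜 := ⟨hR₃F, hR₃max⟩
        have hgenW : C ∩ (R₁ : Set G) ∩ (R₂ : Set G) ⊆ (R₃ : Set G) := by
          intro z hz
          have hzD : z ∈ D := subset_closure hz
          exact hWR₃ (subset_closure ⟨hz.1.1, Subgroup.le_normalizer hzD⟩)
        have hDgen₁ : closure ((C ∩ (R₁ : Set G)) ∩ (D : Set G)) = D := by
          refine le_antisymm ((closure_le _).mpr (fun z hz => hz.2)) ?_
          conv_lhs => rw [hD]
          refine closure_mono ?_
          intro z hz
          exact ⟨hz.1, subset_closure hz⟩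
        obtain ⟨x₁, hx₁X, hx₁D, hx₁conj⟩ := SP (Nat.card R₁) R₁ D (C ∩ (R₁ : Set G)) le_rfl (hF2 R₁ hR₁M.1)
          Set.inter_subset_right
          (fun x hx r hr => ⟨hCconj x hx.1 r, mul_mem (mul_mem hr hx.2) (inv_mem hr)⟩)
          (hR₁M.1.2.2).symm hDgen₁ hDltR₁
        have hx₁inv : x₁⁻¹ = x₁ := inv_eq_self_of_sq (hCinvol _ hx₁X.1)
        have hx₁norm : x₁ ∈ (normalizer (D : Set G)) := by
          rw [Subgroup.mem_normalizer_iff]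
          intro h
          constructor
          · exact fun hh => hx₁conj h hh
          · intro hh
            have hmem := hx₁conj _ hh
            have heq : x₁ * (x₁ * h * x₁⁻¹) * x₁⁻¹ = h := by
              rw [hx₁inv]
              calc x₁ * (x₁ * h * x₁) * x₁ = x₁ * x₁ * h * (x₁ * x₁) := by group
              _ = h := by rw [hCinvol _ hx₁X.1]; group
            rwa [heq] at hmem
        have hx₁R₃ : x₁ ∈ R₃ := hWR₃ (subset_closure ⟨hx₁X.1, hx₁norm⟩)
        have hR₃eq : R₃ = R₁ := by
          by_contra hne₃
          have hmem' : (R₁, R₃) ∈ 𝓟 :=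
            ⟨hR₁M, hR₃M, fun h => hne₃ h.symm, ⟨x₁, ⟨hx₁X.1, hx₁X.2⟩, hx₁R₃⟩⟩
          have hDle : D ≤ closure (C ∩ (R₁ : Set G) ∩ (R₃ : Set G)) := by
            conv_lhs => rw [hD]
            refine closure_mono ?_
            intro z hz
            exact ⟨hz.1, hgenW hz⟩
          have hx₁D₁₃ : x₁ ∈ closure (C ∩ (R₁ : Set G) ∩ (R₃ : Set G)) :=
            subset_closure ⟨⟨hx₁X.1, hx₁X.2⟩, hx₁R₃⟩
          have hlt : Nat.card D < Nat.card (closure (C ∩ (R₁ : Set G) ∩ (R₃ : Set G))) :=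
            card_lt_of_lt (lt_of_le_of_ne hDle
              (fun heq => hx₁D (heq.symm ▸ hx₁D₁₃)))
          exact absurd (hPmax (j := (R₁, R₃)) hmem' (le_of_lt hlt)) (not_le.mpr hlt)
        have hDgen₂ : closure ((C ∩ (R₂ : Set G)) ∩ (D : Set G)) = D := by
          refine le_antisymm ((closure_le _).mpr (fun z hz => hz.2)) ?_
          conv_lhs => rw [hD]
          refine closure_mono ?_
          intro z hz
          exact ⟨⟨hz.1.1, hz.2⟩, subset_closure hz⟩
        obtain ⟨x₂, hx₂X, hx₂D, hx₂conj⟩ := SP (Nat.card R₂) R₂ D (C ∩ (R₂ : Set G)) le_rfl (hF2 R₂ hR₂M.1)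
          Set.inter_subset_right
          (fun x hx r hr => ⟨hCconj x hx.1 r, mul_mem (mul_mem hr hx.2) (inv_mem hr)⟩)
          (hR₂M.1.2.2).symm hDgen₂ hDltR₂
        have hx₂inv : x₂⁻¹ = x₂ := inv_eq_self_of_sq (hCinvol _ hx₂X.1)
        have hx₂norm : x₂ ∈ (normalizer (D : Set G)) := by
          rw [Subgroup.mem_normalizer_iff]
          intro h
          constructor
          · exact fun hh => hx₂conj h hh
          · intro hh
            have hmem := hx₂conj _ hh
            have heq : x₂ * (x₂ * h * x₂⁻¹) * x₂⁻¹ = h := by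
              rw [hx₂inv]
              calc x₂ * (x₂ * h * x₂) * x₂ = x₂ * x₂ * h * (x₂ * x₂) := by group
              _ = h := by rw [hCinvol _ hx₂X.1]; group
            rwa [heq] at hmem
        have hx₂R₁ : x₂ ∈ R₁ := by
          rw [← hR₃eq]
          exact hWR₃ (subset_closure ⟨hx₂X.1, hx₂norm⟩)
        exact hx₂D (subset_closure ⟨⟨hx₂X.1, hx₂R₁⟩, hx₂X.2⟩)

lemma baer_suzuki {G : Type*} [Group G] [Finite G] (t : G) (ht2 : t * t = 1)
    (ht1 : t ≠ 1) (hpair : ∀ g : G, ∃ k : ℕ, (t * (g * t * g⁻¹)) ^ (2:ℕ) ^ k = 1) :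
    ∃ N : Subgroup G, N.Normal ∧ IsPGroup 2 N ∧ t ∈ N :=
  baer_suzuki_invol (Nat.card G) G inferInstance inferInstance le_rfl t ht2 ht1 hpair

lemma stab2 {G Ω : Type*} [Group G] [MulAction G Ω] [MulAction.IsPretransitive G Ω]
    {ω : Ω} (hstab : IsPGroup 2 (MulAction.stabilizer G ω)) (x : Ω) :
    IsPGroup 2 (MulAction.stabilizer G x) := by
  obtain ⟨c, hc⟩ := MulAction.exists_smul_eq G ω x
  rw [← hc, MulAction.stabilizer_smul_eq_stabilizer_map_conj]
  exact hstab.map _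

lemma invol_bound {G Ω : Type*} [Group G] [Finite G] [Finite Ω] [MulAction G Ω]
    [MulAction.IsPretransitive G Ω]
    (hO2 : ∀ N : Subgroup G, N.Normal → IsPGroup 2 N → N = ⊥)
    (ω : Ω) (hstab : IsPGroup 2 (MulAction.stabilizer G ω))
    (t : G) (ht2 : t * t = 1) (ht1 : t ≠ 1) :
    2 * Nat.card Ω ≤ 3 * Nat.card {x : Ω | t • x ≠ x} := by
  classical
  have htinv : t⁻¹ = t := inv_eq_self_of_sq ht2
  have hcompl : Nat.card {x : Ω | t • x = x} + Nat.card {x : Ω | t • x ≠ x} = Nat.card Ω := by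
    have hc : {x : Ω | t • x ≠ x} = ({x : Ω | t • x = x})ᶜ := by
      ext x; simp
    rw [hc, Nat.card_coe_set_eq, Nat.card_coe_set_eq]
    exact Set.ncard_add_ncard_compl _ (Set.toFinite _) (Set.toFinite _)
  by_cases hinv : ∃ w : G, w ≠ 1 ∧ Odd (orderOf w) ∧ t * w * t⁻¹ = w⁻¹
  · obtain ⟨w, hw1, hwodd, hwinv⟩ := hinv
    set r := orderOf w with hr
    have hr0 : 0 < r := orderOf_pos w
    have hr1 : r ≠ 1 := fun h => hw1 (orderOf_eq_one_iff.mp h)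
    have hr3 : 3 ≤ r := by
      obtain ⟨c, hc⟩ := hwodd
      omega
    have hnot2r : ¬ (2 ∣ r) := by
      obtain ⟨c, hc⟩ := hwodd
      omega
    -- free action of nontrivial elements of ⟨w⟩
    have hfree : ∀ z : G, z ^ (r : ℕ) = 1 → z ≠ 1 → ∀ x : Ω, z • x ≠ x := by
      intro z hzr hz1 x hzx
      have hzst : z ∈ MulAction.stabilizer G x := MulAction.mem_stabilizer_iff.mpr hzx
      obtain ⟨k, hk⟩ := stab2 hstab x ⟨z, hzst⟩
      have hk' : z ^ (2:ℕ) ^ k = 1 := by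
        have := congrArg Subtype.val hk
        push_cast at this
        exact this
      have hd1 : orderOf z ∣ 2 ^ k := orderOf_dvd_of_pow_eq_one hk'
      have hd2 : orderOf z ∣ r := orderOf_dvd_of_pow_eq_one hzr
      have hcop : Nat.Coprime (2 ^ k) r :=
        Nat.Coprime.pow_left k ((Nat.prime_two.coprime_iff_not_dvd).mpr hnot2r)
      have : orderOf z ∣ Nat.gcd (2 ^ k) r := Nat.dvd_gcd hd1 hd2
      rw [hcop] at this
      exact hz1 (orderOf_eq_one_iff.mp (Nat.dvd_one.mp this))
    have hA : ∀ i : ℤ, t * w ^ i = w ^ (-i) * t := by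
      intro i
      have h1 : t * w ^ i * t⁻¹ = (t * w * t⁻¹) ^ i := (conj_zpow).symm
      rw [hwinv, inv_zpow, ← zpow_neg] at h1
      calc t * w ^ i = t * w ^ i * t⁻¹ * t := by rw [inv_mul_cancel_right]
      _ = w ^ (-i) * t := by rw [h1]
    have hwr : w ^ (r : ℕ) = 1 := by rw [hr]; exact pow_orderOf_eq_one w
    have hzr : ∀ i : ℤ, (w ^ i) ^ (r : ℕ) = 1 := by
      intro i
      rw [← zpow_natCast, ← zpow_mul, mul_comm, zpow_mul, zpow_natCast, hwr, one_zpow]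
    have hdvd_of_one : ∀ i : ℤ, w ^ i = 1 → (r : ℤ) ∣ i := by
      intro i hi
      exact orderOf_dvd_iff_zpow_eq_one.mpr hi
    -- key claim
    have hFIX : ∀ a : Ω, t • a = a → ∀ a' : Ω, t • a' = a' → ∀ i : ℤ,
        w ^ i • a = a' → a = a' ∧ w ^ i • a = a := by
      intro a ha a' ha' i hi
      have h2 : a' = w ^ (-i) • a := by
        rw [← ha', ← hi, ← mul_smul, hA, mul_smul, ha]
      have h1 : w ^ i • a = w ^ (-i) • a := by rw [hi, h2]
      have h2k : w ^ (2 * i) • a = a := by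
        have h3 : w ^ i • (w ^ i • a) = w ^ i • (w ^ (-i) • a) := by rw [h1]
        rw [← mul_smul, ← mul_smul, ← zpow_add, ← zpow_add, add_neg_cancel, zpow_zero,
          one_smul] at h3
        rw [two_mul]
        exact h3
      have hz1 : w ^ (2 * i) = 1 := by
        by_contra hne
        exact hfree _ (hzr (2 * i)) hne a h2k
      have hdvd : (r : ℤ) ∣ 2 * i := hdvd_of_one _ hz1
      have hcop : IsCoprime (r : ℤ) (2 : ℤ) := by
        rw [Int.isCoprime_iff_gcd_eq_one]
        have : Nat.gcd 2 r = 1 := (Nat.prime_two.coprime_iff_not_dvd).mpr hnot2r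
        simpa [Int.gcd, Nat.gcd_comm] using this
      have hdi : (r : ℤ) ∣ i := by
        exact IsCoprime.dvd_of_dvd_mul_left hcop hdvd
      have hwi : w ^ i = 1 := orderOf_dvd_iff_zpow_eq_one.mp hdi
      constructor
      · rw [← hi, hwi, one_smul]
      · rw [hwi, one_smul]
    -- the injective map
    set F : Set Ω := {x : Ω | t • x = x} with hF
    let f : F × Fin r → Ω := fun p => w ^ ((p.2 : ℕ)) • (p.1 : Ω)
    have hinj : Function.Injective f := by
      rintro ⟨⟨a, ha⟩, i⟩ ⟨⟨a', ha'⟩, j⟩ hfeq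
      simp only [f] at hfeq
      -- hfeq : w ^ (i:ℕ) • a = w ^ (j:ℕ) • a'
      have hstep : w ^ ((i : ℤ) - (j : ℤ)) • a = a' := by
        have h1 : a' = (w ^ ((j : ℕ)))⁻¹ • (w ^ ((i : ℕ)) • a) := by
          rw [hfeq, ← mul_smul, inv_mul_cancel, one_smul]
        rw [h1, ← mul_smul]
        congr 1
        rw [sub_eq_neg_add, zpow_add, ← zpow_natCast w i, ← zpow_natCast w j, zpow_neg]
      obtain ⟨haa', hfix2⟩ := hFIX a ha a' ha' _ hstep
      have hwij : w ^ ((i : ℤ) - (j : ℤ)) = 1 := by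
        by_contra hne
        exact hfree _ (hzr _) hne a hfix2
      have hdvd : (r : ℤ) ∣ (i : ℤ) - (j : ℤ) := hdvd_of_one _ hwij
      have hij : (i : ℤ) = (j : ℤ) := by
        by_contra hne
        have hpos : 0 < |(i : ℤ) - (j : ℤ)| := abs_pos.mpr (sub_ne_zero.mpr hne)
        have hle : (r : ℤ) ≤ |(i : ℤ) - (j : ℤ)| :=
          Int.le_of_dvd hpos ((dvd_abs _ _).mpr hdvd)
        have hib : (i : ℤ) < r := by exact_mod_cast i.isLt
        have hjb : (j : ℤ) < r := by exact_mod_cast j.isLt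
        have hi0 : 0 ≤ (i : ℤ) := Int.natCast_nonneg _
        have hj0 : 0 ≤ (j : ℤ) := Int.natCast_nonneg _
        have habs : |(i : ℤ) - (j : ℤ)| < r := abs_sub_lt_iff.mpr ⟨by omega, by omega⟩
        omega
      have hijn : i = j := by
        apply Fin.ext
        exact_mod_cast hij
      subst hijn
      apply Prod.ext
      · exact Subtype.ext haa'
      · rfl
    have hcard1 : Nat.card (F × Fin r) ≤ Nat.card Ω := Nat.card_le_card_of_injective f hinj
    have hcard2 : Nat.card (F × Fin r) = Nat.card F * r := by
      rw [Nat.card_prod]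
      congr 1
      rw [Nat.card_eq_fintype_card, Fintype.card_fin]
    have h3f : 3 * Nat.card F ≤ Nat.card Ω := by
      calc 3 * Nat.card F ≤ r * Nat.card F := Nat.mul_le_mul_right _ hr3
      _ = Nat.card F * r := Nat.mul_comm _ _
      _ ≤ Nat.card Ω := by rw [← hcard2]; exact hcard1
    have hFc : Nat.card F = Nat.card {x : Ω | t • x = x} := rfl
    omega
  · -- no inverted odd element: Baer–Suzuki applies and contradicts hO2
    exfalso
    push_neg at hinv
    have hpair : ∀ g : G, ∃ k : ℕ, (t * (g * t * g⁻¹)) ^ (2:ℕ) ^ k = 1 := by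
      intro g
      set u := t * (g * t * g⁻¹) with hu
      have hginv : (g * t * g⁻¹)⁻¹ = g * t * g⁻¹ := by
        rw [mul_inv_rev, mul_inv_rev, htinv, inv_inv]
        group
      have huinv : t * u * t⁻¹ = u⁻¹ := by
        rw [hu, mul_inv_rev, hginv, htinv, ← mul_assoc, ← mul_assoc, ht2, one_mul]
      have hord0 : orderOf u ≠ 0 := (orderOf_pos u).ne'
      set a := (orderOf u).factorization 2 with ha
      have h2a : (2:ℕ) ^ a ∣ orderOf u := Nat.ordProj_dvd _ 2
      set v := u ^ ((2:ℕ) ^ a) with hv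
      have hov : orderOf v = orderOf u / 2 ^ a := by
        rw [hv, orderOf_pow, Nat.gcd_eq_right h2a]
      have hmodd : ¬ 2 ∣ orderOf u / 2 ^ a := Nat.not_dvd_ordCompl Nat.prime_two hord0
      have hvodd : Odd (orderOf v) := by
        rw [hov]
        exact Nat.odd_iff.mpr (by omega)
      have hvinv : t * v * t⁻¹ = v⁻¹ := by
        rw [hv, ← conj_pow, huinv, inv_pow]
      have hv1 : v = 1 := by
        by_contra hne
        exact (hinv v hne hvodd) hvinv
      exact ⟨a, by rw [← hv]; exact hv1⟩
    obtain ⟨N, hNn, hN2, htN⟩ := baer_suzuki t ht2 ht1 hpair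
    rw [hO2 N hNn hN2] at htN
    exact ht1 (Subgroup.mem_bot.mp htN)

end MinDeg

/-- **Theorem (main).** Let `G` be a finite group acting faithfully and transitively on a
finite set `Ω` such that every normal `2`-subgroup of `G` is trivial (`O₂(G) = 1`) and the
stabiliser of a point `ω` is a `2`-group.  Then the minimal degree of `G` on `Ω` is at least
`2|Ω|/3`:  every non-identity `g ∈ G` satisfies `3·|supp_Ω(g)| ≥ 2·|Ω|`. -/
theorem minimal_degree_of_two_group_stabiliser
    {G Ω : Type*} [Group G] [Finite G] [Finite Ω] [MulAction G Ω]
    [FaithfulSMul G Ω] [MulAction.IsPretransitive G Ω]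
    (hO2 : ∀ N : Subgroup G, N.Normal → IsPGroup 2 N → N = ⊥)
    (ω : Ω) (hstab : IsPGroup 2 (MulAction.stabilizer G ω)) :
    ∀ g : G, g ≠ 1 → 2 * Nat.card Ω ≤ 3 * Nat.card {x : Ω | g • x ≠ x} := by
  intro g hg
  by_cases hfix : ∃ x : Ω, g • x = x
  · obtain ⟨x₀, hx₀⟩ := hfix
    have hstabx : IsPGroup 2 (MulAction.stabilizer G x₀) := MinDeg.stab2 hstab x₀
    obtain ⟨k, hk⟩ := hstabx ⟨g, MulAction.mem_stabilizer_iff.mpr hx₀⟩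
    have hk' : g ^ (2:ℕ) ^ k = 1 := by
      have := congrArg Subtype.val hk
      push_cast at this
      exact this
    have hdvd : orderOf g ∣ 2 ^ k := orderOf_dvd_of_pow_eq_one hk'
    obtain ⟨m, hmk, hordg⟩ := (Nat.dvd_prime_pow Nat.prime_two).mp hdvd
    have hm1 : 1 ≤ m := by
      by_contra h
      have hm0 : m = 0 := by omega
      rw [hm0, pow_zero] at hordg
      exact hg (orderOf_eq_one_iff.mp hordg)
    set t := g ^ ((2:ℕ) ^ (m - 1)) with hT
    have hordt : orderOf t = 2 := by
      rw [hT, orderOf_pow, hordg, Nat.gcd_eq_right (pow_dvd_pow 2 (by omega)),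
        Nat.pow_div (by omega) (by norm_num), show m - (m - 1) = 1 by omega, pow_one]
    have ht2 : t * t = 1 := by
      rw [← pow_two, ← hordt]
      exact pow_orderOf_eq_one t
    have ht1 : t ≠ 1 := by
      intro h
      rw [h, orderOf_one] at hordt
      omega
    have hsub : {x : Ω | t • x ≠ x} ⊆ {x : Ω | g • x ≠ x} := by
      intro x hx hgx
      apply hx
      show t • x = x
      rw [hT]
      have hpow : ∀ j : ℕ, g ^ j • x = x := by
        intro j
        induction j with
        | zero => simp
        | succ j ihj =>
          rw [pow_succ, mul_smul, hgx]
          exact ihj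
      exact hpow _
    have hb := MinDeg.invol_bound hO2 ω hstab t ht2 ht1
    have hmono : Nat.card {x : Ω | t • x ≠ x} ≤ Nat.card {x : Ω | g • x ≠ x} := by
      rw [Nat.card_coe_set_eq, Nat.card_coe_set_eq]
      exact Set.ncard_le_ncard hsub (Set.toFinite _)
    omega
  · push_neg at hfix
    have huniv : {x : Ω | g • x ≠ x} = Set.univ := Set.eq_univ_of_forall (fun x => hfix x)
    rw [huniv]
    have hcard : Nat.card (Set.univ : Set Ω) = Nat.card Ω := by
      rw [Nat.card_coe_set_eq, Set.ncard_univ]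
    omega
end

section
/- Let X be a finite group acting on a finite set Ω, let Y be a normal subgroup of X, let x ∈ X and let ω ∈ Ω. Then |Fix_{ω^Y}(x)| · |x^Y| = |x^Y ∩ X_ω| · |ω^Y|, where ω^Y is the Y-orbit of ω, x^Y = { y⁻¹ x y : y ∈ Y } is the Y-conjugacy class of x, Fix_{ω^Y}(x) is the set of points of ω^Y fixed by x, and X_ω is the stabiliser of ω in X. -/
open MulAction

private lemma key_count {G α : Type*} [Group G] [Finite G] [MulAction G α] (ω : α) (T : Set α)
    (hT : T ⊆ orbit G ω) :
    Nat.card {g : G | g • ω ∈ T} * Nat.card (orbit G ω) = Nat.card T * Nat.card G := by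
  classical
  have hc : ∀ t : T, ∃ g : G, g • ω = (t : α) := fun t => hT t.2
  choose c hcspec using hc
  have hbij : Function.Bijective (fun p : T × stabilizer G ω =>
      (⟨c p.1 * (p.2 : G), by
        have : ((p.2 : G)) • ω = ω := p.2.2
        simp [Set.mem_setOf_eq, mul_smul, this, hcspec, p.1.2]⟩ :
        {g : G | g • ω ∈ T})) := by
    constructor
    · rintro ⟨t, s⟩ ⟨t', s'⟩ h
      have h' : c t * (s : G) = c t' * (s' : G) := congrArg Subtype.val h
      have hsω : (s : G) • ω = ω := s.2
      have hs'ω : (s' : G) • ω = ω := s'.2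
      have ht : (t : α) = (t' : α) := by
        have := congrArg (fun g : G => g • ω) h'
        simpa [mul_smul, hsω, hs'ω, hcspec] using this
      have htt : t = t' := Subtype.ext ht
      subst htt
      have : (s : G) = (s' : G) := by
        exact mul_left_cancel h'
      exact Prod.ext rfl (Subtype.ext this)
    · rintro ⟨g, hg⟩
      refine ⟨⟨⟨g • ω, hg⟩, ⟨(c ⟨g • ω, hg⟩)⁻¹ * g, ?_⟩⟩, ?_⟩
      · show ((c ⟨g • ω, hg⟩)⁻¹ * g) • ω = ω
        have h := hcspec ⟨g • ω, hg⟩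
        simp only [Subtype.coe_mk] at h
        rw [mul_smul, inv_smul_eq_iff]
        exact h.symm
      · apply Subtype.ext
        simp
  have h1 : Nat.card {g : G | g • ω ∈ T} = Nat.card T * Nat.card (stabilizer G ω) := by
    rw [← Nat.card_eq_of_bijective _ hbij, Nat.card_prod]
  have h2 : Nat.card G = Nat.card (orbit G ω) * Nat.card (stabilizer G ω) := by
    rw [Subgroup.card_eq_card_quotient_mul_card_subgroup (stabilizer G ω),
      Nat.card_congr (orbitEquivQuotientStabilizer G ω)]
  rw [h1, h2]
  ring

/-- Let `X` be a finite group acting on a finite set `Ω`, let `Y ⊴ X`, let `x ∈ X` and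
`ω ∈ Ω`.  Then `|Fix_{ω^Y}(x)| · |x^Y| = |x^Y ∩ X_ω| · |ω^Y|`, where `ω^Y` is the `Y`-orbit
of `ω` and `x^Y = {y⁻¹xy : y ∈ Y}` is the `Y`-conjugacy class of `x`. -/
theorem fix_mul_class_eq_class_inter_stabilizer_mul_orbit
    {X Ω : Type*} [Group X] [Finite X] [Finite Ω] [MulAction X Ω]
    (Y : Subgroup X) (hY : Y.Normal) (x : X) (ω : Ω) :
    Nat.card {δ : Ω | δ ∈ MulAction.orbit Y ω ∧ x • δ = δ}
        * Nat.card {z : X | ∃ y ∈ Y, y⁻¹ * x * y = z}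
      = Nat.card ({z : X | ∃ y ∈ Y, y⁻¹ * x * y = z} ∩ (MulAction.stabilizer X ω : Set X) : Set X)
        * Nat.card (MulAction.orbit Y ω) := by
  classical
  -- the conjugation action of Y on X
  letI actY : MulAction Y X :=
    MulAction.compHom X ((ConjAct.toConjAct : X ≃* ConjAct X).toMonoidHom.comp Y.subtype)
  have hsmul : ∀ (y : Y) (z : X), y • z = (y : X) * z * (y : X)⁻¹ := fun y z => rfl
  set T1 : Set Ω := {δ : Ω | δ ∈ MulAction.orbit Y ω ∧ x • δ = δ} with hT1def
  set C : Set X := {z : X | ∃ y ∈ Y, y⁻¹ * x * y = z} with hCdef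
  set T2 : Set X := C ∩ (MulAction.stabilizer X ω : Set X) with hT2def
  -- the conj orbit of x equals C
  have horb : MulAction.orbit Y x = C := by
    ext z
    constructor
    · rintro ⟨y, rfl⟩
      show (y : X) * x * (y : X)⁻¹ ∈ C
      exact ⟨(y : X)⁻¹, Y.inv_mem y.2, by rw [inv_inv]⟩
    · rintro ⟨y, hy, rfl⟩
      exact ⟨⟨y⁻¹, Y.inv_mem hy⟩, by show y⁻¹ * x * y⁻¹⁻¹ = _; rw [inv_inv]⟩
  have h1 := key_count (G := Y) ω T1 (fun δ hδ => hδ.1)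
  have h2 := key_count (G := Y) x T2 (by rw [horb]; exact Set.inter_subset_left)
  rw [horb] at h2
  have hiff : ∀ y : Y, y • ω ∈ T1 ↔ (y⁻¹ : Y) • x ∈ T2 := by
    intro y
    have hsm : (y⁻¹ : Y) • x = (y : X)⁻¹ * x * (y : X) := by
      show ((y⁻¹ : Y) : X) * x * ((y⁻¹ : Y) : X)⁻¹ = _
      simp
    have h0 : (y : X) • ω = y • ω := rfl
    constructor
    · rintro ⟨-, hfix⟩
      constructor
      · exact ⟨(y : X), y.2, hsm.symm⟩
      · show ((y⁻¹ : Y) • x) • ω = ω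
        rw [hsm, mul_smul, mul_smul, h0, hfix, ← h0, inv_smul_smul]
    · rintro ⟨-, hst⟩
      refine ⟨MulAction.mem_orbit ω y, ?_⟩
      have hst' : ((y : X)⁻¹ * x * (y : X)) • ω = ω := by rw [← hsm]; exact hst
      rw [mul_smul, mul_smul, h0] at hst'
      have := congrArg (fun δ => (y : X) • δ) hst'
      simpa [smul_inv_smul, h0] using this
  have hS : Nat.card {g : Y | g • ω ∈ T1} = Nat.card {g : Y | g • x ∈ T2} :=
    Nat.card_congr (Equiv.subtypeEquiv (Equiv.inv Y) fun y => hiff y)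
  rw [hS] at h1
  refine Nat.eq_of_mul_eq_mul_right (Nat.card_pos (α := Y)) ?_
  calc Nat.card T1 * Nat.card C * Nat.card Y
      = Nat.card C * (Nat.card {g : Y | g • x ∈ T2} * Nat.card (MulAction.orbit Y ω)) := by
        rw [h1]; ring
    _ = Nat.card (MulAction.orbit Y ω) * (Nat.card {g : Y | g • x ∈ T2} * Nat.card C) := by ring
    _ = Nat.card T2 * Nat.card (MulAction.orbit Y ω) * Nat.card Y := by rw [h2]; ring
end

section
/- Let G be a finite group acting faithfully and transitively on a finite set Ω such that every normal 2-subgroup of G is trivial and such that the point stabiliser G_ω is a 2-group. Let Q be a Sylow 2-subgroup of G containing G_ω and let B = ω^Q be the Q-orbit of ω. Then B is a block for the action of G on Ω, the setwise stabiliser of B in G is exactly Q, and G acts faithfully on the set Σ = { B^g : g ∈ G } of translates of B. -/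
open Pointwise

/-- Let `G` be a finite group acting faithfully and transitively on a finite set `Ω` with
`O₂(G) = 1` and with point stabiliser `G_ω` a `2`-group.  Let `Q` be a Sylow `2`-subgroup of
`G` containing `G_ω` and let `B = ω^Q` be the `Q`-orbit of `ω`.  Then `B` is a block for the
action of `G` on `Ω`, the setwise stabiliser of `B` in `G` is exactly `Q`, and `G` acts
faithfully on the set `Σ = {B^g : g ∈ G}` of translates of `B` (i.e. only the identity fixes
every translate of `B` setwise). -/
theorem orbit_of_sylow_is_block_with_faithful_action
    {G Ω : Type*} [Group G] [Finite G] [Finite Ω] [MulAction G Ω]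
    [FaithfulSMul G Ω] [MulAction.IsPretransitive G Ω]
    (hO2 : ∀ N : Subgroup G, N.Normal → IsPGroup 2 N → N = ⊥)
    (ω : Ω) (hstab : IsPGroup 2 (MulAction.stabilizer G ω))
    (Q : Sylow 2 G) (hQω : MulAction.stabilizer G ω ≤ (Q : Subgroup G)) :
    MulAction.IsBlock G (MulAction.orbit (Q : Subgroup G) ω) ∧
    MulAction.stabilizer G (MulAction.orbit (Q : Subgroup G) ω) = (Q : Subgroup G) ∧
    (∀ g : G,
      (∀ x : G, g • (x • (MulAction.orbit (Q : Subgroup G) ω))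
          = x • (MulAction.orbit (Q : Subgroup G) ω)) → g = 1) := by
  set B := MulAction.orbit (Q : Subgroup G) ω with hB
  refine ⟨MulAction.IsBlock.of_orbit hQω, MulAction.stabilizer_orbit_eq hQω, ?_⟩
  -- the kernel of the action on translates
  have hstabB : MulAction.stabilizer G B = (Q : Subgroup G) :=
    MulAction.stabilizer_orbit_eq hQω
  set N : Subgroup G :=
    { carrier := {g : G | ∀ x : G, g • (x • B) = x • B}
      one_mem' := by intro x; simp
      mul_mem' := by
        intro a b ha hb x
        rw [mul_smul, hb x, ha x]
      inv_mem' := by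
        intro a ha x
        rw [inv_smul_eq_iff, ha x] } with hN
  have hNmem : ∀ g : G, g ∈ N ↔ ∀ x : G, g • (x • B) = x • B := fun g => Iff.rfl
  have hNnormal : N.Normal := by
    constructor
    intro g hg h x
    have : (h * g * h⁻¹) • (x • B) = h • g • ((h⁻¹ * x) • B) := by
      rw [mul_smul, mul_smul, mul_smul]
    rw [this, hg (h⁻¹ * x), smul_smul, mul_inv_cancel_left]
  have hNleQ : N ≤ (Q : Subgroup G) := by
    intro g hg
    rw [← hstabB, MulAction.mem_stabilizer_iff]
    have := hg 1
    simpa using this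
  have hNp : IsPGroup 2 N := IsPGroup.to_le Q.isPGroup' hNleQ
  have hNbot : N = ⊥ := hO2 N hNnormal hNp
  intro g hg
  have : g ∈ N := hg
  rw [hNbot, Subgroup.mem_bot] at this
  exact this
end

section
/- Let G be a finite group acting faithfully and transitively on a finite set Ω, let K be a normal subgroup of G, and suppose that for some (equivalently, every) ω ∈ Ω the stabiliser G_ω is a Sylow 2-subgroup of G. Then for every ω ∈ Ω, the normal subgroup K acts faithfully on the K-orbit ω^K; that is, the only element of K fixing every point of ω^K is the identity. -/
/-- Let `G` be a finite group acting faithfully and transitively on a finite set `Ω`, let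
`K ⊴ G`, and suppose that for some `ω₀ ∈ Ω` the stabiliser `G_{ω₀}` is a Sylow `2`-subgroup
of `G`.  Then for every `ω ∈ Ω` the normal subgroup `K` acts faithfully on the `K`-orbit
`ω^K`:  the only element of `K` fixing every point of `ω^K` is the identity. -/
theorem normal_subgroup_faithful_on_orbits
    {G Ω : Type*} [Group G] [Finite G] [Finite Ω] [MulAction G Ω]
    [FaithfulSMul G Ω] [MulAction.IsPretransitive G Ω]
    (K : Subgroup G) (hK : K.Normal)
    (ω₀ : Ω) (hsyl : ∃ S : Sylow 2 G, (S : Subgroup G) = MulAction.stabilizer G ω₀)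
    (ω : Ω) (k : K) (hfix : ∀ δ ∈ MulAction.orbit K ω, (k : G) • δ = δ) :
    (k : G) = 1 := by
  classical
  obtain ⟨S, hS⟩ := hsyl
  have fact2 : Fact (Nat.Prime 2) := ⟨Nat.prime_two⟩
  -- every point stabilizer is (the carrier of) a Sylow 2-subgroup
  have hstab : ∀ δ : Ω, ∃ T : Sylow 2 G, (T : Subgroup G) = MulAction.stabilizer G δ := by
    intro δ
    obtain ⟨g, hg⟩ := MulAction.exists_smul_eq G ω₀ δ
    refine ⟨(MulAut.conj g) • S, ?_⟩
    rw [← hg, MulAction.stabilizer_smul_eq_stabilizer_map_conj, ← hS]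
    rfl
  -- the family of 2-subgroups of K that are normalized by K
  set Fam : Set (Subgroup G) :=
    {P | P ≤ K ∧ IsPGroup 2 P ∧
      ∀ a ∈ K, P.map ((MulAut.conj a).toMonoidHom : G →* G) ≤ P} with hFam
  -- the kernel N of K acting on the orbit of ω
  have horbinv : ∀ a ∈ K, ∀ δ ∈ MulAction.orbit K ω, a • δ ∈ MulAction.orbit K ω := by
    rintro a ha δ ⟨b, rfl⟩
    exact ⟨⟨a, ha⟩ * b, by simp [mul_smul]⟩
  let N : Subgroup G :=
    { carrier := {x | x ∈ K ∧ ∀ δ ∈ MulAction.orbit K ω, x • δ = δ}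
      one_mem' := ⟨K.one_mem, fun δ _ => one_smul G δ⟩
      mul_mem' := by
        rintro x y ⟨hx, hx'⟩ ⟨hy, hy'⟩
        exact ⟨K.mul_mem hx hy, fun δ hδ => by rw [mul_smul, hy' δ hδ, hx' δ hδ]⟩
      inv_mem' := by
        rintro x ⟨hx, hx'⟩
        refine ⟨K.inv_mem hx, fun δ hδ => ?_⟩
        conv_lhs => rw [← hx' δ hδ]
        simp }
  have hkN : (k : G) ∈ N := ⟨k.2, hfix⟩
  -- N is a 2-group
  have hNle : ∀ δ ∈ MulAction.orbit K ω, N ≤ MulAction.stabilizer G δ := by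
    intro δ hδ x hx
    exact hx.2 δ hδ
  have hNp : IsPGroup 2 N := by
    obtain ⟨T, hT⟩ := hstab ω
    exact IsPGroup.to_le T.isPGroup' (hT ▸ hNle ω (MulAction.mem_orbit_self ω))
  have hNFam : N ∈ Fam := by
    refine ⟨fun x hx => hx.1, hNp, ?_⟩
    rintro a ha x hx
    simp only [Subgroup.mem_map] at hx
    obtain ⟨y, ⟨hyK, hy⟩, rfl⟩ := hx
    refine ⟨K.mul_mem (K.mul_mem ha hyK) (K.inv_mem ha), fun δ hδ => ?_⟩
    have h1 : a⁻¹ • δ ∈ MulAction.orbit K ω := horbinv a⁻¹ (K.inv_mem ha) δ hδ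
    have h2 := hy _ h1
    have : (MulAut.conj a).toMonoidHom y • δ = a • y • a⁻¹ • δ := by
      simp [MulAut.conj_apply, mul_smul]
    rw [this, h2, smul_inv_smul]
  -- auxiliary: membership in Fam is stable under sup
  have hsup : ∀ P ∈ Fam, ∀ Q ∈ Fam, P ⊔ Q ∈ Fam := by
    rintro P ⟨hP1, hP2, hP3⟩ Q ⟨hQ1, hQ2, hQ3⟩
    refine ⟨sup_le hP1 hQ1, ?_, ?_⟩
    · refine IsPGroup.to_sup_of_normal_right' hP2 hQ2 ?_
      intro x hx
      rw [Subgroup.mem_normalizer_iff]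
      intro y
      constructor
      · intro hy
        exact hQ3 x (hP1 hx) ⟨y, hy, rfl⟩
      · intro hy
        have := hQ3 x⁻¹ (K.inv_mem (hP1 hx)) ⟨_, hy, rfl⟩
        simpa [mul_assoc] using this
    · intro a ha
      rw [Subgroup.map_sup]
      exact sup_le (le_trans (hP3 a ha) le_sup_left) (le_trans (hQ3 a ha) le_sup_right)
  -- pick a maximal member O of Fam
  have hFamFin : Fam.Finite := Set.toFinite Fam
  obtain ⟨O, hOFam, hOmax⟩ :=
    Set.Finite.exists_maximalFor id Fam hFamFin ⟨N, hNFam⟩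
  simp only [id] at hOmax
  -- every member of Fam is contained in O
  have hle : ∀ P ∈ Fam, P ≤ O := by
    intro P hP
    have h1 : P ⊔ O ∈ Fam := hsup P hP O hOFam
    have h2 : O = P ⊔ O := le_antisymm le_sup_right (hOmax h1 le_sup_right)
    exact h2 ▸ le_sup_left
  have hkO : (k : G) ∈ O := hle N hNFam hkN
  -- O is invariant under conjugation by any element of G
  have hconjmem : ∀ g : G, O.map ((MulAut.conj g).toMonoidHom : G →* G) ∈ Fam := by
    intro g
    obtain ⟨hO1, hO2, hO3⟩ := hOFam
    refine ⟨?_, hO2.map _, ?_⟩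
    · rintro x ⟨y, hy, rfl⟩
      exact hK.conj_mem y (hO1 hy) g
    · intro a ha
      rw [Subgroup.map_map]
      have hcomp : ∀ b c : G,
          ((MulAut.conj b).toMonoidHom : G →* G).comp (MulAut.conj c).toMonoidHom
            = (MulAut.conj (b * c)).toMonoidHom := by
        intro b c
        ext x
        simp [MulAut.conj_apply, mul_assoc]
      rw [hcomp]
      have key : a * g = g * (g⁻¹ * a * g) := by group
      rw [key, ← hcomp, ← Subgroup.map_map]
      exact Subgroup.map_mono (hO3 _ (Subgroup.Normal.conj_mem' hK a ha g))
  have hconj : ∀ g : G, O.map ((MulAut.conj g).toMonoidHom : G →* G) = O := by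
    intro g
    refine le_antisymm (hle _ (hconjmem g)) ?_
    intro x hx
    have hx' : (MulAut.conj g⁻¹) x ∈ O := hle _ (hconjmem g⁻¹) ⟨x, hx, rfl⟩
    exact ⟨_, hx', by simp [MulAut.conj_apply]; group⟩
  -- O is contained in every Sylow 2-subgroup, in particular in every stabilizer
  obtain ⟨O1, hO1⟩ := hOFam.2.1.exists_le_sylow
  have hOstab : ∀ δ : Ω, O ≤ MulAction.stabilizer G δ := by
    intro δ
    obtain ⟨T, hT⟩ := hstab δ
    obtain ⟨g, hg⟩ := MulAction.exists_smul_eq G O1 T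
    rw [← hT, ← hg]
    intro x hx
    have hx' : x ∈ O.map ((MulAut.conj g).toMonoidHom : G →* G) := (hconj g).symm ▸ hx
    obtain ⟨y, hy, rfl⟩ := hx'
    have : (y : G) ∈ (O1 : Subgroup G) := hO1 hy
    show (MulAut.conj g).toMonoidHom y ∈ ((g • O1 : Sylow 2 G) : Subgroup G)
    rw [Sylow.smul_def, Sylow.pointwise_smul_def]
    exact Subgroup.smul_mem_pointwise_smul _ _ _ this
  -- conclude by faithfulness
  have : ∀ δ : Ω, (k : G) • δ = (1 : G) • δ := by
    intro δ
    rw [one_smul]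
    exact hOstab δ hkO
  exact eq_of_smul_eq_smul this
end

section
/- Let Δ be a finite set, let ℓ ≥ 1, let a_1, …, a_ℓ be permutations of Δ and let σ be a non-identity permutation of {1, …, ℓ}. Consider the permutation x of the Cartesian power Δ^ℓ defined by x(δ_1, …, δ_ℓ) = (δ'_1, …, δ'_ℓ) where δ'_i = a_{σ⁻¹(i)}(δ_{σ⁻¹(i)}) for each i. Then the number of fixed points of x on Δ^ℓ is at most |Δ|^{ℓ−1}; in particular, if |Δ| ≥ 3 then x fixes at most |Δ^ℓ|/3 points. -/
/-- Let `Δ` be a finite set, `ℓ ≥ 1`, `a_1, …, a_ℓ` permutations of `Δ`, and `σ ≠ 1` a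
permutation of `{1, …, ℓ}`.  The element `x = (a_1, …, a_ℓ)σ` acts on `Δ^ℓ` by
`x(δ)_i = a_{σ⁻¹(i)}(δ_{σ⁻¹(i)})`.  Then `x` fixes at most `|Δ|^{ℓ-1}` points of `Δ^ℓ`;
in particular, if `|Δ| ≥ 3` then `x` fixes at most `|Δ^ℓ|/3` points. -/
theorem wreath_product_fixed_points_of_nontrivial_top
    {Δ : Type*} [Fintype Δ] {ℓ : ℕ} (hℓ : 1 ≤ ℓ)
    (a : Fin ℓ → Equiv.Perm Δ) (σ : Equiv.Perm (Fin ℓ)) (hσ : σ ≠ 1) :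
    Nat.card {δ : Fin ℓ → Δ | (fun i => a (σ⁻¹ i) (δ (σ⁻¹ i))) = δ}
        ≤ Fintype.card Δ ^ (ℓ - 1) ∧
    (3 ≤ Fintype.card Δ →
      3 * Nat.card {δ : Fin ℓ → Δ | (fun i => a (σ⁻¹ i) (δ (σ⁻¹ i))) = δ}
        ≤ Fintype.card Δ ^ ℓ) := by
  obtain ⟨j, hj⟩ : ∃ j, σ j ≠ j := by
    by_contra h
    push_neg at h
    exact hσ (Equiv.ext h)
  have key : Nat.card {δ : Fin ℓ → Δ | (fun i => a (σ⁻¹ i) (δ (σ⁻¹ i))) = δ}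
      ≤ Fintype.card Δ ^ (ℓ - 1) := by
    have hinj : Function.Injective
        (fun (δ : {δ : Fin ℓ → Δ | (fun i => a (σ⁻¹ i) (δ (σ⁻¹ i))) = δ})
          (i : {i : Fin ℓ // i ≠ σ j}) => δ.1 i.1) := by
      rintro ⟨δ, hδ⟩ ⟨δ', hδ'⟩ h
      simp only [Set.mem_setOf_eq] at hδ hδ'
      simp only at h
      have hjj : δ j = δ' j := congrFun h ⟨j, Ne.symm hj⟩
      apply Subtype.ext
      funext i
      by_cases hi : i = σ j
      · subst hi
        have h1 := congrFun hδ (σ j)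
        have h2 := congrFun hδ' (σ j)
        simp only [Equiv.Perm.inv_def, Equiv.symm_apply_apply] at h1 h2
        show δ (σ j) = δ' (σ j)
        rw [← h1, ← h2, hjj]
      · exact congrFun h ⟨i, hi⟩
    have h1 := Nat.card_le_card_of_injective _ hinj
    have h2 : Nat.card ({i : Fin ℓ // i ≠ σ j} → Δ) = Fintype.card Δ ^ (ℓ - 1) := by
      simp [Nat.card_eq_fintype_card, Fintype.card_fun]
    exact le_trans h1 (le_of_eq h2)
  refine ⟨key, fun h3 => ?_⟩
  have hpow : Fintype.card Δ * Fintype.card Δ ^ (ℓ - 1) = Fintype.card Δ ^ ℓ := by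
    rw [← pow_succ', Nat.sub_add_cancel hℓ]
  have := Nat.mul_le_mul_right (Fintype.card Δ ^ (ℓ - 1)) h3
  nlinarith [key]
end

section
/- Let n ≥ 5 and let P be a Sylow 2-subgroup of the alternating group Alt(n). In the action of Alt(n) on the set of cosets of P by multiplication, every non-identity element g ∈ Alt(n) fixes at most one third of the cosets; that is, 3·|Fix(g)| ≤ [Alt(n) : P]. -/
set_option maxRecDepth 20000

open Equiv Equiv.Perm

section Aux
variable {G : Type*} [Group G] [Finite G] (P : Subgroup G)

omit [Finite G] in
private lemma fix_disjoint (hP : IsPGroup 2 P) (u v : G)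
    (h3 : (v * u) ^ 3 = 1) (hne : v * u ≠ 1) :
    {x : G ⧸ P | u • x = x} ∩ {x : G ⧸ P | v • x = x} = ∅ := by
  ext x
  simp only [Set.mem_inter_iff, Set.mem_setOf_eq, Set.mem_empty_iff_false, iff_false, not_and]
  intro hu hv
  obtain ⟨y, rfl⟩ := QuotientGroup.mk_surjective x
  have hy : ∀ w : G, w • (QuotientGroup.mk y : G ⧸ P) = QuotientGroup.mk y →
      y⁻¹ * w⁻¹ * y ∈ P := by
    intro w hw
    have h1 : (QuotientGroup.mk (w * y) : G ⧸ P) = QuotientGroup.mk y := hw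
    have := (QuotientGroup.eq (s := P)).1 h1
    simpa [mul_assoc] using this
  have hu' := hy u hu
  have hv' := hy v hv
  have hmem : y⁻¹ * (v * u)⁻¹ * y ∈ P := by
    have := P.mul_mem hu' hv'
    simpa [mul_assoc, mul_inv_rev] using this
  set α : G := y⁻¹ * (v * u)⁻¹ * y with hα
  obtain ⟨k, hk⟩ := hP ⟨α, hmem⟩
  have hk' : α ^ 2 ^ k = 1 := by
    have := congrArg (Subtype.val) hk
    simpa using this
  have h3' : α ^ 3 = 1 := by
    have hobv : α ^ 3 = y⁻¹ * ((v * u)⁻¹) ^ 3 * (y⁻¹)⁻¹ := by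
      rw [hα]
      rw [show y⁻¹ * (v * u)⁻¹ * y = y⁻¹ * (v * u)⁻¹ * (y⁻¹)⁻¹ by simp]
      exact conj_pow ..
    rw [hobv, inv_pow, h3]
    simp
  have hd1 : orderOf α ∣ 3 := orderOf_dvd_of_pow_eq_one h3'
  have hd2 : orderOf α ∣ 2 ^ k := orderOf_dvd_of_pow_eq_one hk'
  have hcop : Nat.Coprime 3 (2 ^ k) := Nat.Coprime.pow_right k (by norm_num)
  have hone : orderOf α = 1 := Nat.eq_one_of_dvd_coprimes hcop hd1 hd2
  have hα1 : α = 1 := orderOf_eq_one_iff.mp hone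
  apply hne
  have h2 : (v * u)⁻¹ = 1 := by
    have := congrArg (fun z => y * z * y⁻¹) hα1
    simpa [hα, mul_assoc] using this
  have := congrArg (·⁻¹) h2
  simpa using this

omit [Finite G] in
private lemma fix_conj_eq (t : G) (e : G) :
    {x : G ⧸ P | (e⁻¹ * t * e) • x = x} = (fun x : G ⧸ P => e⁻¹ • x) '' {x | t • x = x} := by
  ext x
  simp only [Set.mem_setOf_eq, Set.mem_image]
  constructor
  · intro hx
    rw [mul_smul, mul_smul] at hx
    refine ⟨e • x, ?_, by rw [inv_smul_smul]⟩
    have := congrArg (fun z => e • z) hx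
    rwa [smul_inv_smul] at this
  · rintro ⟨y, hy, rfl⟩
    rw [mul_smul, mul_smul, smul_inv_smul, hy]

private lemma three_fix_le (hP : IsPGroup 2 P) (t c : G)
    (ht2 : t * t = 1) (hc3 : c ^ 3 = 1) (hc1 : c ≠ 1) (hinv : t * c * t = c⁻¹) :
    3 * Nat.card {x : G ⧸ P | t • x = x} ≤ Nat.card (G ⧸ P) := by
  have e1 : c * t = t * c⁻¹ := by
    have h0 := congrArg (fun z => t * z) hinv
    rw [← mul_assoc, ← mul_assoc, ht2, one_mul] at h0
    exact h0
  have e1' : ∀ x : G, c * (t * x) = t * (c⁻¹ * x) := by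
    intro x; rw [← mul_assoc, e1, mul_assoc]
  have ht2' : ∀ x : G, t * (t * x) = x := by
    intro x; rw [← mul_assoc, ht2, one_mul]
  set u2 : G := c⁻¹ * t * c with hu2
  set u3 : G := (c * c)⁻¹ * t * (c * c) with hu3
  have hcc3 : (c⁻¹ * c⁻¹) ^ 3 = 1 := by
    rw [show (c⁻¹ * c⁻¹) ^ 3 = ((c ^ 3) * (c ^ 3))⁻¹ by group, hc3]; simp
  have hccne : c⁻¹ * c⁻¹ ≠ 1 := by
    intro h
    apply hc1
    have h2 : c * c = 1 := by
      have := congrArg (fun z => z⁻¹) h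
      simpa [mul_inv_rev] using this
    calc c = c ^ 3 * (c * c)⁻¹ := by group
    _ = 1 := by rw [hc3, h2]; simp
  have hc1' : c⁻¹ ≠ 1 := fun h => hc1 (by simpa using congrArg (·⁻¹) h)
  have hc3' : (c⁻¹) ^ 3 = 1 := by rw [inv_pow, hc3]; simp
  have w12 : u2 * t = c⁻¹ * c⁻¹ := by
    rw [hu2, mul_assoc, mul_assoc, ← mul_assoc t c t, hinv]
  have w13 : u3 * t = c⁻¹ := by
    have h : u3 * t = c⁻¹ * (c⁻¹ * (t * (c * (c * t)))) := by rw [hu3]; group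
    rw [h, e1, e1', ht2']
    rw [show c⁻¹ * (c⁻¹ * (c⁻¹ * c⁻¹)) = (c ^ 3)⁻¹ * c⁻¹ by group, hc3]; simp
  have w23 : u3 * u2 = c⁻¹ * c⁻¹ := by
    have h : u3 * u2 = c⁻¹ * (c⁻¹ * (t * (c * (t * c)))) := by rw [hu3, hu2]; group
    rw [h, e1', ht2']
    simp [mul_assoc]
  set A1 : Set (G ⧸ P) := {x | t • x = x} with hA1
  set A2 : Set (G ⧸ P) := {x | u2 • x = x} with hA2
  set A3 : Set (G ⧸ P) := {x | u3 • x = x} with hA3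
  have himg2 : A2 = (fun x : G ⧸ P => c⁻¹ • x) '' A1 := fix_conj_eq P t c
  have himg3 : A3 = (fun x : G ⧸ P => (c * c)⁻¹ • x) '' A1 := fix_conj_eq P t (c * c)
  have hcard2 : A2.ncard = A1.ncard := by
    rw [himg2]; exact Set.ncard_image_of_injective _ (MulAction.injective _)
  have hcard3 : A3.ncard = A1.ncard := by
    rw [himg3]; exact Set.ncard_image_of_injective _ (MulAction.injective _)
  have hd12 : A1 ∩ A2 = ∅ :=
    fix_disjoint P hP t u2 (by rw [w12]; exact hcc3) (by rw [w12]; exact hccne)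
  have hd13 : A1 ∩ A3 = ∅ :=
    fix_disjoint P hP t u3 (by rw [w13]; exact hc3') (by rw [w13]; exact hc1')
  have hd23 : A2 ∩ A3 = ∅ :=
    fix_disjoint P hP u2 u3 (by rw [w23]; exact hcc3) (by rw [w23]; exact hccne)
  have hdisj12 : Disjoint A1 A2 := Set.disjoint_iff_inter_eq_empty.mpr hd12
  have hdisj3 : Disjoint (A1 ∪ A2) A3 := by
    rw [Set.disjoint_iff_inter_eq_empty, Set.union_inter_distrib_right, hd13, hd23,
      Set.union_empty]
  have hunion : (A1 ∪ A2 ∪ A3).ncard = A1.ncard + A2.ncard + A3.ncard := by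
    rw [Set.ncard_union_eq hdisj3 (Set.toFinite _) (Set.toFinite _),
        Set.ncard_union_eq hdisj12 (Set.toFinite _) (Set.toFinite _)]
  have hle : (A1 ∪ A2 ∪ A3).ncard ≤ Nat.card (G ⧸ P) := by
    rw [← Set.ncard_univ]
    exact Set.ncard_le_ncard (Set.subset_univ _) (Set.toFinite _)
  rw [Nat.card_coe_set_eq]
  omega
end Aux

section PermConstr
variable {β : Type*} [DecidableEq β] [Fintype β]

private lemma caseA (σ : Perm β) (hσ2 : ∀ x, σ (σ x) = x) (a b f : β)
    (hab : a ≠ b) (hb : σ a = b) (hf : σ f = f) :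
    ∃ γ : Perm β, γ.sign = 1 ∧ γ ^ 3 = 1 ∧ γ ≠ 1 ∧ σ * γ * σ = γ⁻¹ := by
  have hsb : σ b = a := by rw [← hb, hσ2]
  have haf : a ≠ f := fun h => hab (by rw [← hb, h, hf])
  have hbf : b ≠ f := fun h => hab (by rw [← hsb, h]; exact hf)
  set γ : Perm β := Equiv.swap a b * Equiv.swap b f with hγ
  have g1 : γ a = b := by
    simp only [hγ, Equiv.Perm.mul_apply, Equiv.swap_apply_of_ne_of_ne hab haf,
      Equiv.swap_apply_left]
  have g2 : γ b = f := by
    simp only [hγ, Equiv.Perm.mul_apply, Equiv.swap_apply_left,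
      Equiv.swap_apply_of_ne_of_ne (Ne.symm haf) (Ne.symm hbf)]
  have g3 : γ f = a := by
    simp only [hγ, Equiv.Perm.mul_apply, Equiv.swap_apply_right]
  have gother : ∀ x, x ≠ a → x ≠ b → x ≠ f → γ x = x := by
    intro x hxa hxb hxf
    simp only [hγ, Equiv.Perm.mul_apply, Equiv.swap_apply_of_ne_of_ne hxb hxf,
      Equiv.swap_apply_of_ne_of_ne hxa hxb]
  refine ⟨γ, ?_, ?_, ?_, ?_⟩
  · simp [hγ, Equiv.Perm.sign_swap, hab, hbf]
  · ext x
    have hcube : (γ ^ 3) x = γ (γ (γ x)) := by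
      simp [pow_succ, Equiv.Perm.mul_apply]
    rw [hcube]
    simp only [Equiv.Perm.one_apply]
    by_cases hxa : x = a
    · rw [hxa, g1, g2, g3]
    by_cases hxb : x = b
    · rw [hxb, g2, g3, g1]
    by_cases hxf : x = f
    · rw [hxf, g3, g1, g2]
    · rw [gother x hxa hxb hxf, gother x hxa hxb hxf, gother x hxa hxb hxf]
  · intro h
    apply hab
    have := congrArg (fun p : Perm β => p a) h
    simpa [g1] using this.symm
  · have key : γ * (σ * γ * σ) = 1 := by
      ext x
      simp only [Equiv.Perm.mul_apply, Equiv.Perm.one_apply]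
      by_cases hxa : x = a
      · rw [hxa, hb, g2, hf, g3]
      by_cases hxb : x = b
      · rw [hxb, hsb, g1, hsb, g1]
      by_cases hxf : x = f
      · rw [hxf, hf, g3, hb, g2]
      · have h1 : σ x ≠ a := fun h => hxb (by rw [← hb, ← h, hσ2])
        have h2 : σ x ≠ b := fun h => hxa (by
          have h' := congrArg σ h; rw [hσ2] at h'; rwa [hsb] at h')
        have h3 : σ x ≠ f := fun h => hxf (by
          have h' := congrArg σ h; rwa [hσ2, hf] at h')
        rw [gother _ h1 h2 h3, hσ2, gother _ hxa hxb hxf]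
    exact (inv_eq_of_mul_eq_one_right key).symm

private lemma caseB (σ : Perm β) (hσ2 : ∀ x, σ (σ x) = x)
    (a1 b1 a2 b2 a3 b3 : β)
    (hb1 : σ a1 = b1) (hb2 : σ a2 = b2) (hb3 : σ a3 = b3)
    (d1 : a1 ≠ b1) (d2 : a2 ≠ b2) (d3 : a3 ≠ b3)
    (h2a : a2 ≠ a1) (h2b : a2 ≠ b1)
    (h3a : a3 ≠ a1) (h3b : a3 ≠ b1) (h3c : a3 ≠ a2) (h3d : a3 ≠ b2) :
    ∃ γ : Perm β, γ.sign = 1 ∧ γ ^ 3 = 1 ∧ γ ≠ 1 ∧ σ * γ * σ = γ⁻¹ := by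
  have hs1 : σ b1 = a1 := by rw [← hb1, hσ2]
  have hs2 : σ b2 = a2 := by rw [← hb2, hσ2]
  have hs3 : σ b3 = a3 := by rw [← hb3, hσ2]
  have e1 : b2 ≠ a1 := fun h => h2b (by rw [← hs2, h, hb1])
  have e2 : b2 ≠ b1 := fun h => h2a (by rw [← hs2, h, hs1])
  have e3 : b3 ≠ a1 := fun h => h3b (by rw [← hs3, h, hb1])
  have e4 : b3 ≠ b1 := fun h => h3a (by rw [← hs3, h, hs1])
  have e5 : b3 ≠ a2 := fun h => h3d (by rw [← hs3, h, hb2])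
  have e6 : b3 ≠ b2 := fun h => h3c (by rw [← hs3, h, hs2])
  set γ : Perm β := Equiv.swap a1 a2 * Equiv.swap a2 a3 * (Equiv.swap b1 b3 * Equiv.swap b3 b2)
    with hγ
  have g1 : γ a1 = a2 := by
    simp [hγ, Equiv.Perm.mul_apply, Equiv.swap_apply_def,
      d1, d2, d3, h2a, h2b, h3a, h3b, h3c, h3d, e1, e2, e3, e4, e5, e6,
      d1.symm, d2.symm, d3.symm, h2a.symm, h2b.symm, h3a.symm, h3b.symm, h3c.symm, h3d.symm,
      e1.symm, e2.symm, e3.symm, e4.symm, e5.symm, e6.symm]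
  have g2 : γ a2 = a3 := by
    simp [hγ, Equiv.Perm.mul_apply, Equiv.swap_apply_def,
      d1, d2, d3, h2a, h2b, h3a, h3b, h3c, h3d, e1, e2, e3, e4, e5, e6,
      d1.symm, d2.symm, d3.symm, h2a.symm, h2b.symm, h3a.symm, h3b.symm, h3c.symm, h3d.symm,
      e1.symm, e2.symm, e3.symm, e4.symm, e5.symm, e6.symm]
  have g3 : γ a3 = a1 := by
    simp [hγ, Equiv.Perm.mul_apply, Equiv.swap_apply_def,
      d1, d2, d3, h2a, h2b, h3a, h3b, h3c, h3d, e1, e2, e3, e4, e5, e6,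
      d1.symm, d2.symm, d3.symm, h2a.symm, h2b.symm, h3a.symm, h3b.symm, h3c.symm, h3d.symm,
      e1.symm, e2.symm, e3.symm, e4.symm, e5.symm, e6.symm]
  have g4 : γ b1 = b3 := by
    simp [hγ, Equiv.Perm.mul_apply, Equiv.swap_apply_def,
      d1, d2, d3, h2a, h2b, h3a, h3b, h3c, h3d, e1, e2, e3, e4, e5, e6,
      d1.symm, d2.symm, d3.symm, h2a.symm, h2b.symm, h3a.symm, h3b.symm, h3c.symm, h3d.symm,
      e1.symm, e2.symm, e3.symm, e4.symm, e5.symm, e6.symm]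
  have g5 : γ b3 = b2 := by
    simp [hγ, Equiv.Perm.mul_apply, Equiv.swap_apply_def,
      d1, d2, d3, h2a, h2b, h3a, h3b, h3c, h3d, e1, e2, e3, e4, e5, e6,
      d1.symm, d2.symm, d3.symm, h2a.symm, h2b.symm, h3a.symm, h3b.symm, h3c.symm, h3d.symm,
      e1.symm, e2.symm, e3.symm, e4.symm, e5.symm, e6.symm]
  have g6 : γ b2 = b1 := by
    simp [hγ, Equiv.Perm.mul_apply, Equiv.swap_apply_def,
      d1, d2, d3, h2a, h2b, h3a, h3b, h3c, h3d, e1, e2, e3, e4, e5, e6,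
      d1.symm, d2.symm, d3.symm, h2a.symm, h2b.symm, h3a.symm, h3b.symm, h3c.symm, h3d.symm,
      e1.symm, e2.symm, e3.symm, e4.symm, e5.symm, e6.symm]
  have gother : ∀ x, x ≠ a1 → x ≠ b1 → x ≠ a2 → x ≠ b2 → x ≠ a3 → x ≠ b3 → γ x = x := by
    intro x k1 k2 k3 k4 k5 k6
    simp [hγ, Equiv.Perm.mul_apply, Equiv.swap_apply_def, k1, k2, k3, k4, k5, k6]
  refine ⟨γ, ?_, ?_, ?_, ?_⟩
  · simp [hγ, Equiv.Perm.sign_swap, h2a.symm, h3c.symm, e4.symm, e6]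
  · ext x
    have hcube : (γ ^ 3) x = γ (γ (γ x)) := by
      simp [pow_succ, Equiv.Perm.mul_apply]
    rw [hcube]
    simp only [Equiv.Perm.one_apply]
    by_cases k1 : x = a1
    · rw [k1, g1, g2, g3]
    by_cases k2 : x = b1
    · rw [k2, g4, g5, g6]
    by_cases k3 : x = a2
    · rw [k3, g2, g3, g1]
    by_cases k4 : x = b2
    · rw [k4, g6, g4, g5]
    by_cases k5 : x = a3
    · rw [k5, g3, g1, g2]
    by_cases k6 : x = b3
    · rw [k6, g5, g6, g4]
    · rw [gother x k1 k2 k3 k4 k5 k6, gother x k1 k2 k3 k4 k5 k6,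
        gother x k1 k2 k3 k4 k5 k6]
  · intro h
    apply h2a
    have := congrArg (fun p : Perm β => p a1) h
    simpa [g1] using this
  · have key : γ * (σ * γ * σ) = 1 := by
      ext x
      simp only [Equiv.Perm.mul_apply, Equiv.Perm.one_apply]
      by_cases k1 : x = a1
      · rw [k1, hb1, g4, hs3, g3]
      by_cases k2 : x = b1
      · rw [k2, hs1, g1, hb2, g6]
      by_cases k3 : x = a2
      · rw [k3, hb2, g6, hs1, g1]
      by_cases k4 : x = b2
      · rw [k4, hs2, g2, hb3, g5]
      by_cases k5 : x = a3
      · rw [k5, hb3, g5, hs2, g2]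
      by_cases k6 : x = b3
      · rw [k6, hs3, g3, hb1, g4]
      · have m1 : σ x ≠ a1 := fun h => k2 (by rw [← hσ2 x, h, hb1])
        have m2 : σ x ≠ b1 := fun h => k1 (by
          rw [← hb1] at h; have h' := congrArg σ h; rwa [hσ2, hσ2] at h')
        have m3 : σ x ≠ a2 := fun h => k4 (by rw [← hσ2 x, h, hb2])
        have m4 : σ x ≠ b2 := fun h => k3 (by
          rw [← hb2] at h; have h' := congrArg σ h; rwa [hσ2, hσ2] at h')
        have m5 : σ x ≠ a3 := fun h => k6 (by rw [← hσ2 x, h, hb3])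
        have m6 : σ x ≠ b3 := fun h => k5 (by
          rw [← hb3] at h; have h' := congrArg σ h; rwa [hσ2, hσ2] at h')
        rw [gother _ m1 m2 m3 m4 m5 m6, hσ2, gother _ k1 k2 k3 k4 k5 k6]
    exact (inv_eq_of_mul_eq_one_right key).symm
end PermConstr

private lemma exists_notin {n : ℕ} (s : Finset (Fin n)) (h : s.card < n) : ∃ x, x ∉ s := by
  by_contra hc
  push_neg at hc
  have h1 : (Finset.univ : Finset (Fin n)) ⊆ s := fun x _ => hc x
  have := Finset.card_le_card h1
  rw [Finset.card_univ, Fintype.card_fin] at this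
  omega

/-- Let `n ≥ 5` and let `P` be a Sylow `2`-subgroup of `Alt(n)`.  In the action of `Alt(n)`
on the cosets of `P` by multiplication, every non-identity `g ∈ Alt(n)` fixes at most one
third of the cosets: `3·|Fix(g)| ≤ [Alt(n) : P]`. -/
theorem alt_on_sylow_two_cosets_fixed_points
    {n : ℕ} (hn : 5 ≤ n) (P : Sylow 2 (alternatingGroup (Fin n)))
    (g : alternatingGroup (Fin n)) (hg : g ≠ 1) :
    3 * Nat.card {x : alternatingGroup (Fin n) ⧸ (P : Subgroup (alternatingGroup (Fin n))) | g • x = x}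
      ≤ Nat.card (alternatingGroup (Fin n) ⧸ (P : Subgroup (alternatingGroup (Fin n)))) := by
  classical
  by_cases hemp :
      {x : alternatingGroup (Fin n) ⧸ (P : Subgroup (alternatingGroup (Fin n))) | g • x = x} = ∅
  · rw [hemp]; simp
  obtain ⟨x0, hx0⟩ := Set.nonempty_iff_ne_empty.2 hemp
  simp only [Set.mem_setOf_eq] at hx0
  obtain ⟨y, rfl⟩ := QuotientGroup.mk_surjective x0
  -- g is conjugate into P, hence a 2-element
  have hmem : y⁻¹ * g⁻¹ * y ∈ (P : Subgroup (alternatingGroup (Fin n))) := by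
    have h1 : (QuotientGroup.mk (g * y) :
        alternatingGroup (Fin n) ⧸ (P : Subgroup (alternatingGroup (Fin n)))) =
        QuotientGroup.mk y := hx0
    have := (QuotientGroup.eq (s := (P : Subgroup (alternatingGroup (Fin n))))).1 h1
    simpa [mul_assoc] using this
  obtain ⟨k, hk⟩ := P.isPGroup' ⟨_, hmem⟩
  have hk' : (y⁻¹ * g⁻¹ * y) ^ 2 ^ k = 1 := by
    have := congrArg Subtype.val hk
    simpa using this
  have hg2 : g ^ 2 ^ k = 1 := by
    have hobv : (y⁻¹ * g⁻¹ * y) ^ 2 ^ k = y⁻¹ * (g⁻¹) ^ 2 ^ k * (y⁻¹)⁻¹ := by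
      rw [show y⁻¹ * g⁻¹ * y = y⁻¹ * g⁻¹ * (y⁻¹)⁻¹ by simp]
      exact conj_pow ..
    rw [hobv] at hk'
    have h2 : (g⁻¹) ^ 2 ^ k = 1 := by
      have := congrArg (fun z => y * z * y⁻¹) hk'
      simpa [mul_assoc] using this
    rw [inv_pow] at h2
    simpa using congrArg (·⁻¹) h2
  have hdvd : orderOf g ∣ 2 ^ k := orderOf_dvd_of_pow_eq_one hg2
  obtain ⟨j, hjk, horder⟩ := (Nat.dvd_prime_pow Nat.prime_two).1 hdvd
  have hj0 : j ≠ 0 := by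
    intro h
    apply hg
    rw [h, pow_zero] at horder
    exact orderOf_eq_one_iff.mp horder
  set t : alternatingGroup (Fin n) := g ^ 2 ^ (j - 1) with htdef
  have hexp : 2 ^ (j - 1) + 2 ^ (j - 1) = 2 ^ j := by
    rw [← two_mul, ← pow_succ']
    congr 1
    omega
  have ht2 : t * t = 1 := by
    rw [htdef, ← pow_add, hexp, ← horder]
    exact pow_orderOf_eq_one g
  have htne : t ≠ 1 := by
    intro h
    have hd := orderOf_dvd_of_pow_eq_one (htdef ▸ h)
    rw [horder] at hd
    have hle := Nat.le_of_dvd (by positivity) hd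
    have := (Nat.pow_le_pow_iff_right (by norm_num : 1 < 2)).1 hle
    omega
  -- Fix(g) ⊆ Fix(t)
  have hsub :
      {x : alternatingGroup (Fin n) ⧸ (P : Subgroup (alternatingGroup (Fin n))) | g • x = x} ⊆
      {x : alternatingGroup (Fin n) ⧸ (P : Subgroup (alternatingGroup (Fin n))) | t • x = x} := by
    intro x hx
    simp only [Set.mem_setOf_eq] at hx ⊢
    have hall : ∀ m : ℕ, g ^ m • x = x := by
      intro m
      induction m with
      | zero => simp
      | succ i ih => rw [pow_succ, mul_smul, hx]; exact ih
    exact hall _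
  have hle1 :
      Nat.card {x : alternatingGroup (Fin n) ⧸ (P : Subgroup (alternatingGroup (Fin n))) | g • x = x} ≤
      Nat.card {x : alternatingGroup (Fin n) ⧸ (P : Subgroup (alternatingGroup (Fin n))) | t • x = x} := by
    rw [Nat.card_coe_set_eq, Nat.card_coe_set_eq]
    exact Set.ncard_le_ncard hsub (Set.toFinite _)
  -- pass to the permutation level
  set σ : Equiv.Perm (Fin n) := (t : Equiv.Perm (Fin n)) with hσdef
  have hσmul : σ * σ = 1 := by
    have := congrArg Subtype.val ht2
    simpa using this
  have hσ2 : ∀ x, σ (σ x) = x := by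
    intro x
    have := congrArg (fun p : Equiv.Perm (Fin n) => p x) hσmul
    simpa using this
  have hσne : σ ≠ 1 := by
    intro h
    apply htne
    apply Subtype.ext
    rw [hσdef] at h
    simpa using h
  have hmoved : ∃ a, σ a ≠ a := by
    by_contra hall
    push_neg at hall
    exact hσne (Equiv.ext hall)
  obtain ⟨a, ha⟩ := hmoved
  have hgamma : ∃ γ : Equiv.Perm (Fin n), γ.sign = 1 ∧ γ ^ 3 = 1 ∧ γ ≠ 1 ∧ σ * γ * σ = γ⁻¹ := by
    by_cases hfix : ∃ f, σ f = f
    · obtain ⟨f, hff⟩ := hfix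
      exact caseA σ hσ2 a (σ a) f (Ne.symm ha) rfl hff
    · push_neg at hfix
      obtain ⟨a2, ha2⟩ := exists_notin ({a, σ a} : Finset (Fin n)) (by
        have := Finset.card_insert_le a ({σ a} : Finset (Fin n))
        simp only [Finset.card_singleton] at this
        omega)
      simp only [Finset.mem_insert, Finset.mem_singleton, not_or] at ha2
      obtain ⟨a3, ha3⟩ := exists_notin ({a, σ a, a2, σ a2} : Finset (Fin n)) (by
        have h1 := Finset.card_insert_le a ({σ a, a2, σ a2} : Finset (Fin n))
        have h2 := Finset.card_insert_le (σ a) ({a2, σ a2} : Finset (Fin n))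
        have h3 := Finset.card_insert_le a2 ({σ a2} : Finset (Fin n))
        simp only [Finset.card_singleton] at h1 h2 h3
        omega)
      simp only [Finset.mem_insert, Finset.mem_singleton, not_or] at ha3
      exact caseB σ hσ2 a (σ a) a2 (σ a2) a3 (σ a3) rfl rfl rfl
        (Ne.symm (hfix a)) (Ne.symm (hfix a2)) (Ne.symm (hfix a3))
        ha2.1 ha2.2 ha3.1 ha3.2.1 ha3.2.2.1 ha3.2.2.2
  obtain ⟨γ, hsign, hγ3, hγ1, hγconj⟩ := hgamma
  set c : alternatingGroup (Fin n) := ⟨γ, Equiv.Perm.mem_alternatingGroup.2 hsign⟩ with hcdef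
  have hc3 : c ^ 3 = 1 := by
    apply Subtype.ext
    have : ((c ^ 3 : alternatingGroup (Fin n)) : Equiv.Perm (Fin n)) = γ ^ 3 := by
      simp [hcdef]
    simpa [this] using hγ3
  have hc1 : c ≠ 1 := by
    intro h
    exact hγ1 (by simpa [hcdef] using congrArg Subtype.val h)
  have hinv : t * c * t = c⁻¹ := by
    apply Subtype.ext
    simpa [hcdef] using hγconj
  have hkey := three_fix_le (P : Subgroup (alternatingGroup (Fin n))) P.isPGroup' t c
    ht2 hc3 hc1 hinv
  omega
end

section
/- For n ≥ 2, the number of n×n upper unitriangular matrices M over the field F_2 that are transvections, i.e. that satisfy rank(M − I) = 1, equals (n − 2)·2^{n−1} + 1. -/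
open Matrix Submodule

lemma zmod2_cases : ∀ c : ZMod 2, c = 0 ∨ c = 1 := by decide
lemma zmod2_ne : ∀ c : ZMod 2, c ≠ 0 → c = 1 := by decide

lemma range_outer {n : ℕ} (u v : Fin n → ZMod 2) (hv : v ≠ 0) :
    LinearMap.range (Matrix.of fun i j => u i * v j).mulVecLin = Submodule.span (ZMod 2) {u} := by
  apply le_antisymm
  · rintro y ⟨x, rfl⟩
    have : (Matrix.of fun i j => u i * v j).mulVecLin x = (∑ j, v j * x j) • u := by
      ext i
      simp only [Matrix.mulVecLin_apply, Matrix.mulVec, dotProduct, Matrix.of_apply,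
        Pi.smul_apply, smul_eq_mul]
      rw [Finset.sum_mul]
      exact Finset.sum_congr rfl fun j _ => by ring
    rw [this]
    exact Submodule.smul_mem _ _ (Submodule.mem_span_singleton_self u)
  · rw [Submodule.span_le, Set.singleton_subset_iff]
    obtain ⟨j0, hj0⟩ := Function.ne_iff.mp hv
    have h1 : v j0 = 1 := zmod2_ne _ hj0
    refine ⟨Pi.single j0 1, ?_⟩
    have : (Matrix.of fun i j => u i * v j).mulVecLin (Pi.single j0 1) = fun i => u i * v j0 := by
      ext i; simp
    rw [this]
    ext i
    simp [h1]

lemma rank_outer {n : ℕ} (u v : Fin n → ZMod 2) (hu : u ≠ 0) (hv : v ≠ 0) :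
    (Matrix.of fun i j => u i * v j).rank = 1 := by
  rw [Matrix.rank, range_outer u v hv, finrank_span_singleton hu]

lemma col_cases {n : ℕ} (A : Matrix (Fin n) (Fin n) (ZMod 2)) (h : A.rank = 1)
    (b : Fin n) (hb : (fun i => A i b) ≠ 0) (j : Fin n) :
    (fun i => A i j) = 0 ∨ (fun i => A i j) = fun i => A i b := by
  set W := LinearMap.range A.mulVecLin with hW
  have hcol : ∀ j : Fin n, (fun i => A i j) ∈ W := by
    intro j
    exact ⟨Pi.single j 1, by ext i; simp⟩
  have hle : Submodule.span (ZMod 2) {fun i => A i b} ≤ W := by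
    rw [Submodule.span_le, Set.singleton_subset_iff]; exact hcol b
  have heq : Submodule.span (ZMod 2) {fun i => A i b} = W := by
    apply Submodule.eq_of_le_of_finrank_le hle
    rw [← Matrix.rank, h, finrank_span_singleton hb]
  have hj := hcol j
  rw [← heq, Submodule.mem_span_singleton] at hj
  obtain ⟨c, hc⟩ := hj
  rcases zmod2_cases c with rfl | rfl
  · left; rw [← hc]; simp
  · right; rw [← hc]; simp
open Matrix Submodule

section defs
variable {n : ℕ}

def uu (b : Fin n) (u : {i : Fin n // (i:ℕ) < (b:ℕ)} → ZMod 2) : Fin n → ZMod 2 :=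
  fun i => if h : (i:ℕ) < (b:ℕ) then u ⟨i, h⟩ else 0

def vv (b : Fin n) (w : {j : Fin n // (b:ℕ) < (j:ℕ)} → ZMod 2) : Fin n → ZMod 2 :=
  fun j => if h : (b:ℕ) < (j:ℕ) then w ⟨j, h⟩ else if j = b then 1 else 0

abbrev Param (n : ℕ) :=
  (b : Fin n) × ({u : {i : Fin n // (i:ℕ) < (b:ℕ)} → ZMod 2 // u ≠ 0} ×
    ({j : Fin n // (b:ℕ) < (j:ℕ)} → ZMod 2))

def mat (p : Param n) : Matrix (Fin n) (Fin n) (ZMod 2) :=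
  Matrix.of fun i j => uu p.1 p.2.1.1 i * vv p.1 p.2.2 j

lemma uu_eq_zero {b : Fin n} {u} {i : Fin n} (h : (b:ℕ) ≤ (i:ℕ)) : uu b u i = 0 := by
  rw [uu, dif_neg (by omega)]

lemma vv_eq_zero {b : Fin n} {w} {j : Fin n} (h : (j:ℕ) < (b:ℕ)) : vv b w j = 0 := by
  rw [vv, dif_neg (by omega), if_neg (by intro hh; subst hh; omega)]

lemma vv_self {b : Fin n} {w} : vv b w b = 1 := by
  rw [vv, dif_neg (by omega), if_pos rfl]

lemma uu_ne_zero {b : Fin n} {u : {i : Fin n // (i:ℕ) < (b:ℕ)} → ZMod 2} (hu : u ≠ 0) :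
    uu b u ≠ 0 := by
  obtain ⟨i0, hi0⟩ := Function.ne_iff.mp hu
  intro h
  apply hi0
  have := congrFun h i0.1
  rwa [uu, dif_pos i0.2] at this

lemma vv_ne_zero {b : Fin n} {w} : vv b w ≠ 0 :=
  fun h => by simpa [vv_self] using congrFun h b

lemma mat_eq_zero (p : Param n) {i j : Fin n} (h : (j:ℕ) ≤ (i:ℕ)) : mat p i j = 0 := by
  rcases lt_or_ge (i:ℕ) (p.1:ℕ) with hi | hi
  · exact mul_eq_zero_of_right _ (vv_eq_zero (by omega))
  · exact mul_eq_zero_of_left (uu_eq_zero hi) _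

lemma mat_rank (p : Param n) : (mat p).rank = 1 :=
  rank_outer _ _ (uu_ne_zero p.2.1.2) vv_ne_zero

end defs

section bij
variable {n : ℕ}

def S (n : ℕ) : Set (Matrix (Fin n) (Fin n) (ZMod 2)) :=
  {M | (∀ i, M i i = 1) ∧ (∀ i j : Fin n, (j : ℕ) < (i : ℕ) → M i j = 0) ∧
        (M - 1).rank = 1}

def f (p : Param n) : S n :=
  ⟨mat p + 1, by
    refine ⟨fun i => ?_, fun i j hij => ?_, ?_⟩
    · rw [Matrix.add_apply, mat_eq_zero p le_rfl, Matrix.one_apply_eq, zero_add]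
    · rw [Matrix.add_apply, mat_eq_zero p (le_of_lt hij),
        Matrix.one_apply_ne (Fin.ne_of_val_ne (by omega)), zero_add]
    · rw [add_sub_cancel_right]
      exact mat_rank p⟩

lemma f_inj : Function.Injective (f (n := n)) := by
  rintro ⟨b, ⟨u, hu⟩, w⟩ ⟨b', ⟨u', hu'⟩, w'⟩ h
  have hmat : mat ⟨b, ⟨u, hu⟩, w⟩ = mat ⟨b', ⟨u', hu'⟩, w'⟩ := by
    have := congrArg Subtype.val h
    simpa [f] using this
  -- columns before b are zero / column b is uu
  have hcolb : ∀ i, mat ⟨b, ⟨u, hu⟩, w⟩ i b = uu b u i := fun i => by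
    show uu b u i * vv b w b = _; rw [vv_self, mul_one]
  have hcolb' : ∀ i, mat ⟨b', ⟨u', hu'⟩, w'⟩ i b' = uu b' u' i := fun i => by
    show uu b' u' i * vv b' w' b' = _; rw [vv_self, mul_one]
  have hbb : b = b' := by
    by_contra hne
    rcases lt_or_gt_of_ne (fun hc : (b:ℕ) = (b':ℕ) => hne (Fin.ext hc)) with hlt | hlt
    · -- b < b' : column b of RHS is zero, but LHS is uu b u ≠ 0
      apply uu_ne_zero hu
      ext i
      have := congrFun (congrFun hmat i) b
      rw [hcolb i] at this
      rw [this]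
      show uu b' u' i * vv b' w' b = 0
      rw [vv_eq_zero hlt, mul_zero]
    · apply uu_ne_zero hu'
      ext i
      have := congrFun (congrFun hmat i) b'
      rw [hcolb' i] at this
      rw [← this]
      show uu b u i * vv b w b' = 0
      rw [vv_eq_zero hlt, mul_zero]
  subst hbb
  have huu : u = u' := by
    ext i
    have := congrFun (congrFun hmat i.1) b
    rw [hcolb i.1, hcolb' i.1] at this
    rwa [uu, uu, dif_pos i.2, dif_pos i.2] at this
  subst huu
  have hww : w = w' := by
    obtain ⟨i0, hi0⟩ := Function.ne_iff.mp hu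
    have hone : uu b u i0.1 = 1 := by
      rw [uu, dif_pos i0.2]; exact zmod2_ne _ hi0
    ext j
    have := congrFun (congrFun hmat i0.1) j.1
    have this : uu b u i0.1 * vv b w j.1 = uu b u i0.1 * vv b w' j.1 := this
    rw [hone, one_mul, one_mul] at this
    rwa [vv, vv, dif_pos j.2, dif_pos j.2] at this
  subst hww
  rfl

lemma f_surj : Function.Surjective (f (n := n)) := by
  rintro ⟨M, hdiag, hlow, hrank⟩
  set N := M - 1 with hN
  have h0 : ∀ i j : Fin n, (j:ℕ) ≤ (i:ℕ) → N i j = 0 := by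
    intro i j hij
    rcases eq_or_lt_of_le hij with heq | hlt
    · have : j = i := Fin.ext heq
      subst this
      rw [hN, Matrix.sub_apply, hdiag j, Matrix.one_apply_eq, sub_self]
    · rw [hN, Matrix.sub_apply, hlow i j hlt,
        Matrix.one_apply_ne (Fin.ne_of_val_ne (by omega)), sub_zero]
  have hNne : N ≠ 0 := by
    intro h
    rw [h, Matrix.rank_zero] at hrank
    exact absurd hrank (by norm_num)
  classical
  have hsne : (Finset.univ.filter (fun j : Fin n => (fun i => N i j) ≠ 0)).Nonempty := by
    by_contra hempty
    apply hNne
    ext i j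
    have hj : ¬ ((fun i => N i j) ≠ 0) := by
      intro hc
      exact hempty ⟨j, Finset.mem_filter.mpr ⟨Finset.mem_univ _, hc⟩⟩
    rw [not_not] at hj
    simpa using congrFun hj i
  set b := (Finset.univ.filter (fun j : Fin n => (fun i => N i j) ≠ 0)).min' hsne with hbdef
  have hb : (fun i => N i b) ≠ 0 := by
    have := Finset.min'_mem _ hsne
    exact (Finset.mem_filter.mp this).2
  have hmin : ∀ j : Fin n, (fun i => N i j) ≠ 0 → b ≤ j := by
    intro j hj
    rw [hbdef]
    apply Finset.min'_le
    exact Finset.mem_filter.mpr ⟨Finset.mem_univ (α := Fin n) j, hj⟩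
  -- u
  set u : {i : Fin n // (i:ℕ) < (b:ℕ)} → ZMod 2 := fun i => N i.1 b with hudef
  have hu : u ≠ 0 := by
    obtain ⟨i0, hi0⟩ := Function.ne_iff.mp hb
    have hilt : (i0:ℕ) < (b:ℕ) := by
      by_contra hge
      exact hi0 (by simpa using h0 i0 b (by omega))
    intro hc
    exact hi0 (by simpa using congrFun hc ⟨i0, hilt⟩)
  set w : {j : Fin n // (b:ℕ) < (j:ℕ)} → ZMod 2 :=
    fun j => if (fun i => N i j.1) = 0 then 0 else 1 with hwdef
  refine ⟨⟨b, ⟨u, hu⟩, w⟩, ?_⟩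
  apply Subtype.ext
  show mat ⟨b, ⟨u, hu⟩, w⟩ + 1 = M
  have hmatN : mat ⟨b, ⟨u, hu⟩, w⟩ = N := by
    have huuN : ∀ i : Fin n, uu b u i = N i b := by
      intro i
      rcases lt_or_ge (i:ℕ) (b:ℕ) with hi | hi
      · rw [uu, dif_pos hi]
      · rw [uu_eq_zero hi, h0 i b hi]
    ext i j
    show uu b u i * vv b w j = N i j
    rcases lt_trichotomy (j:ℕ) (b:ℕ) with hj | hj | hj
    · rw [vv_eq_zero hj, mul_zero]
      have hcolzero : (fun i => N i j) = 0 := by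
        by_contra hc
        have := hmin j hc
        omega
      exact (congrFun hcolzero i).symm
    · have : j = b := Fin.ext hj
      subst this
      rw [vv_self, mul_one, huuN]
    · rw [vv, dif_pos hj]
      have hwval : w ⟨j, hj⟩ = if (fun i => N i j) = 0 then 0 else 1 := rfl
      rcases col_cases N hrank b hb j with hz | he
      · rw [hwval, if_pos hz, mul_zero]
        exact (congrFun hz i).symm
      · rw [hwval, if_neg (by rw [he]; exact hb), mul_one, huuN]
        exact (congrFun he i).symm
  rw [hmatN, hN, sub_add_cancel]
end bij

section count

def e1 {n : ℕ} (b : Fin n) : {i : Fin n // (i:ℕ) < (b:ℕ)} ≃ Fin (b:ℕ) where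
  toFun i := ⟨i.1, i.2⟩
  invFun j := ⟨⟨j.1, lt_trans j.2 b.2⟩, j.2⟩
  left_inv i := rfl
  right_inv j := rfl

def e2 {n : ℕ} (b : Fin n) : {j : Fin n // (b:ℕ) < (j:ℕ)} ≃ Fin (n - ((b:ℕ)+1)) where
  toFun j := ⟨j.1.1 - ((b:ℕ)+1), by have h1 := j.1.2; have h2 := j.2; omega⟩
  invFun m := ⟨⟨m.1 + (b:ℕ) + 1, by have := m.2; omega⟩,
    by show (b:ℕ) < m.1 + (b:ℕ) + 1; omega⟩
  left_inv j := by
    apply Subtype.ext; apply Fin.ext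
    show (j.1.1 - ((b:ℕ)+1)) + (b:ℕ) + 1 = j.1.1
    have := j.2; omega
  right_inv m := by
    apply Fin.ext
    show (m.1 + (b:ℕ) + 1) - ((b:ℕ)+1) = m.1
    omega

lemma card_param (n : ℕ) :
    Nat.card (Param n) = ∑ b : Fin n, (2^(b:ℕ) - 1) * 2^(n - ((b:ℕ)+1)) := by
  rw [Nat.card_eq_fintype_card, Fintype.card_sigma]
  refine Finset.sum_congr rfl fun b _ => ?_
  rw [Fintype.card_prod]
  have h1 : Fintype.card {u : {i : Fin n // (i:ℕ) < (b:ℕ)} → ZMod 2 // u ≠ 0}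
      = 2^(b:ℕ) - 1 := by
    have hc : Fintype.card ({i : Fin n // (i:ℕ) < (b:ℕ)} → ZMod 2) = 2^(b:ℕ) := by
      rw [Fintype.card_fun, ZMod.card, Fintype.card_congr (e1 b), Fintype.card_fin]
    calc Fintype.card {u : {i : Fin n // (i:ℕ) < (b:ℕ)} → ZMod 2 // u ≠ 0}
        = Fintype.card ({i : Fin n // (i:ℕ) < (b:ℕ)} → ZMod 2)
          - Fintype.card {u : {i : Fin n // (i:ℕ) < (b:ℕ)} → ZMod 2 // u = 0} :=
          Fintype.card_subtype_compl _
      _ = 2^(b:ℕ) - 1 := by rw [hc, Fintype.card_subtype_eq]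
  have h2 : Fintype.card ({j : Fin n // (b:ℕ) < (j:ℕ)} → ZMod 2) = 2^(n - ((b:ℕ)+1)) := by
    rw [Fintype.card_fun, ZMod.card, Fintype.card_congr (e2 b), Fintype.card_fin]
  rw [h1, h2]

lemma sum_pow_two (n : ℕ) : ∑ i ∈ Finset.range n, 2^i = 2^n - 1 := by
  induction n with
  | zero => rfl
  | succ k ih =>
    rw [Finset.sum_range_succ, ih, pow_succ]
    have : 1 ≤ 2^k := Nat.one_le_two_pow
    omega

lemma main_sum (n : ℕ) (hn : 2 ≤ n) :
    ∑ b : Fin n, (2^(b:ℕ) - 1) * 2^(n - ((b:ℕ)+1)) = (n - 2) * 2^(n-1) + 1 := by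
  rw [Fin.sum_univ_eq_sum_range (fun b => (2^b - 1) * 2^(n - (b+1)))]
  have key : ∀ b ∈ Finset.range n, (2^b - 1) * 2^(n - (b+1)) + 2^(n - (b+1)) = 2^(n-1) := by
    intro b hb
    rw [Finset.mem_range] at hb
    have h1 : (1:ℕ) ≤ 2^b := Nat.one_le_two_pow
    have h2 : 2^(n - (b+1)) ≤ 2^b * 2^(n - (b+1)) :=
      Nat.le_mul_of_pos_left _ (by positivity)
    rw [Nat.sub_mul, one_mul, Nat.sub_add_cancel h2, ← pow_add]
    congr 1
    omega
  have hsum : (∑ b ∈ Finset.range n, (2^b - 1) * 2^(n - (b+1)))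
      + (∑ b ∈ Finset.range n, 2^(n - (b+1))) = n * 2^(n-1) := by
    rw [← Finset.sum_add_distrib, Finset.sum_congr rfl key]
    simp [Finset.sum_const, Finset.card_range]
  have hgeo : ∑ b ∈ Finset.range n, 2^(n - (b+1)) = 2^n - 1 := by
    have hr := Finset.sum_range_reflect (fun i => 2^i) n
    rw [← sum_pow_two n, ← hr]
    refine Finset.sum_congr rfl fun b hb => ?_
    rw [Finset.mem_range] at hb
    congr 1
    omega
  rw [hgeo] at hsum
  have h2n : 2^n = 2 * 2^(n-1) := by
    conv_lhs => rw [show n = (n-1)+1 by omega]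
    rw [pow_succ]
    ring
  have hK : (1:ℕ) ≤ 2^(n-1) := Nat.one_le_two_pow
  have expand : (n-2) * 2^(n-1) + 2 * 2^(n-1) = n * 2^(n-1) := by
    rw [← Nat.add_mul]
    congr 1
    omega
  omega

end count

/-- For `n ≥ 2`, the number of `n×n` upper unitriangular matrices `M` over `F_2` that are
transvections, i.e. with `rank(M − I) = 1`, equals `(n − 2)·2^{n−1} + 1`. -/
theorem card_unitriangular_transvections
    (n : ℕ) (hn : 2 ≤ n) :
    Nat.card {M : Matrix (Fin n) (Fin n) (ZMod 2) |
        (∀ i, M i i = 1) ∧ (∀ i j : Fin n, (j : ℕ) < (i : ℕ) → M i j = 0) ∧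
        (M - 1).rank = 1}
      = (n - 2) * 2 ^ (n - 1) + 1 := by
  have hbij : Function.Bijective (f (n := n)) := ⟨f_inj, f_surj⟩
  calc Nat.card {M : Matrix (Fin n) (Fin n) (ZMod 2) |
        (∀ i, M i i = 1) ∧ (∀ i j : Fin n, (j : ℕ) < (i : ℕ) → M i j = 0) ∧
        (M - 1).rank = 1}
      = Nat.card (Param n) := (Nat.card_eq_of_bijective _ hbij).symm
    _ = ∑ b : Fin n, (2^(b:ℕ) - 1) * 2^(n - ((b:ℕ)+1)) := card_param n
    _ = (n - 2) * 2 ^ (n - 1) + 1 := main_sum n hn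
end

section
/- For n ≥ 3, let T(n) denote the number of n×n upper unitriangular matrices M over the field F_2 with rank(M − I) = 1. Then T(n) = 2·T(n−1) + 2^{n−1} − 1. -/
open Matrix Finset



lemma zmod2_eq_one {a : ZMod 2} (h : a ≠ 0) : a = 1 := by revert a; decide

lemma zmod2_mul_eq_one {a b : ZMod 2} (h : a * b = 1) : a = 1 ∧ b = 1 := by
  revert a b; decide

lemma vecMulVec_mulVec' {F} [Field F] {m : ℕ} (u v x : Fin m → F) :
    (vecMulVec u v).mulVec x = (v ⬝ᵥ x) • u := by
  funext i
  simp [vecMulVec, mulVec, dotProduct, Finset.mul_sum, mul_comm, mul_left_comm]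

lemma rank_eq_one_iff' {F} [Field F] {m : ℕ} (N : Matrix (Fin m) (Fin m) F) :
    N.rank = 1 ↔ ∃ u v : Fin m → F, u ≠ 0 ∧ v ≠ 0 ∧ N = vecMulVec u v := by
  constructor
  · intro h
    have h' : Module.finrank F (LinearMap.range N.mulVecLin) = 1 := h
    rw [finrank_eq_one_iff'] at h'
    obtain ⟨⟨w, hw⟩, hw0, hspan⟩ := h'
    have hcol : ∀ j, ∃ c : F, c • w = fun i => N i j := by
      intro j
      obtain ⟨c, hc⟩ := hspan ⟨N.mulVec (Pi.single j 1), LinearMap.mem_range_self _ _⟩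
      refine ⟨c, ?_⟩
      have := congrArg Subtype.val hc
      simp [mulVec_single] at this
      exact this
    choose v hv using hcol
    have hN : N = vecMulVec w v := by
      ext i j
      have := congrFun (hv j) i
      simp only [Pi.smul_apply, smul_eq_mul] at this
      simp [vecMulVec, ← this, mul_comm]
    refine ⟨w, v, ?_, ?_, hN⟩
    · simpa using hw0
    · rintro rfl
      have hz : vecMulVec w (0 : Fin m → F) = 0 := by
        ext i j; simp [vecMulVec]
      rw [hN, hz, rank_zero] at h
      exact one_ne_zero h.symm
  · rintro ⟨u, v, hu, hv, rfl⟩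
    have hrange : LinearMap.range (vecMulVec u v).mulVecLin = Submodule.span F {u} := by
      apply le_antisymm
      · rintro _ ⟨x, rfl⟩
        rw [mulVecLin_apply, vecMulVec_mulVec']
        exact Submodule.smul_mem _ _ (Submodule.mem_span_singleton_self u)
      · rw [Submodule.span_le, Set.singleton_subset_iff]
        obtain ⟨j, hj⟩ : ∃ j, v j ≠ 0 := by
          by_contra hc
          push_neg at hc
          exact hv (funext hc)
        refine ⟨((v j)⁻¹ • (Pi.single j 1 : Fin m → F)), ?_⟩
        rw [mulVecLin_apply, vecMulVec_mulVec']
        have : v ⬝ᵥ ((v j)⁻¹ • (Pi.single j 1 : Fin m → F)) = 1 := by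
          simp [dotProduct, Pi.single_apply, mul_comm, hj]
        rw [this, one_smul]
    rw [Matrix.rank, hrange, finrank_span_singleton hu]


lemma vecMulVec_injective {m : ℕ} {u v u' v' : Fin m → ZMod 2} (hu : u ≠ 0) (hv : v ≠ 0)
    (h : vecMulVec u v = vecMulVec u' v') : u = u' ∧ v = v' := by
  obtain ⟨i0, hi0⟩ : ∃ i, u i ≠ 0 := by
    by_contra hc; push_neg at hc; exact hu (funext hc)
  obtain ⟨j0, hj0⟩ : ∃ j, v j ≠ 0 := by
    by_contra hc; push_neg at hc; exact hv (funext hc)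
  have key : ∀ i j, u i * v j = u' i * v' j := fun i j => congrFun (congrFun h i) j
  have h1 : u' i0 * v' j0 = 1 := by
    rw [← key, zmod2_eq_one hi0, zmod2_eq_one hj0, one_mul]
  obtain ⟨hui0, hvj0⟩ := zmod2_mul_eq_one h1
  constructor
  · funext i
    have := key i j0
    rwa [zmod2_eq_one hj0, hvj0, mul_one, mul_one] at this
  · funext j
    have := key i0 j
    rwa [zmod2_eq_one hi0, hui0, one_mul, one_mul] at this

lemma mem_S_of {m : ℕ} (u v : Fin m → ZMod 2) (hu : u ≠ 0) (hv : v ≠ 0)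
    (h3 : ∀ i j : Fin m, u i ≠ 0 → v j ≠ 0 → (i : ℕ) < (j : ℕ)) :
    (1 + vecMulVec u v) ∈ {M : Matrix (Fin m) (Fin m) (ZMod 2) |
        (∀ i, M i i = 1) ∧ (∀ i j : Fin m, (j : ℕ) < (i : ℕ) → M i j = 0) ∧
        (M - 1).rank = 1} := by
  have hz : ∀ i j : Fin m, ¬ (i : ℕ) < (j : ℕ) → u i * v j = 0 := by
    intro i j hij
    by_contra hc
    have hui : u i ≠ 0 := fun h => hc (by rw [h, zero_mul])
    have hvj : v j ≠ 0 := fun h => hc (by rw [h, mul_zero])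
    exact hij (h3 i j hui hvj)
  refine ⟨?_, ?_, ?_⟩
  · intro i
    simp [Matrix.add_apply, vecMulVec_apply, hz i i (lt_irrefl _)]
  · intro i j hij
    have hne : i ≠ j := by intro h; subst h; omega
    simp [Matrix.add_apply, Matrix.one_apply_ne hne, vecMulVec_apply,
      hz i j (by omega)]
  · rw [add_sub_cancel_left, rank_eq_one_iff']
    exact ⟨u, v, hu, hv, rfl⟩

lemma card_S_eq_card_D (m : ℕ) :
    Nat.card {M : Matrix (Fin m) (Fin m) (ZMod 2) |
        (∀ i, M i i = 1) ∧ (∀ i j : Fin m, (j : ℕ) < (i : ℕ) → M i j = 0) ∧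
        (M - 1).rank = 1} =
    Nat.card {p : (Fin m → ZMod 2) × (Fin m → ZMod 2) //
        p.1 ≠ 0 ∧ p.2 ≠ 0 ∧ ∀ i j : Fin m, p.1 i ≠ 0 → p.2 j ≠ 0 → (i : ℕ) < (j : ℕ)} := by
  refine (Nat.card_eq_of_bijective
    (fun p => (⟨1 + vecMulVec p.1.1 p.1.2,
      mem_S_of p.1.1 p.1.2 p.2.1 p.2.2.1 p.2.2.2⟩ :
      {M : Matrix (Fin m) (Fin m) (ZMod 2) |
        (∀ i, M i i = 1) ∧ (∀ i j : Fin m, (j : ℕ) < (i : ℕ) → M i j = 0) ∧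
        (M - 1).rank = 1})) ⟨?_, ?_⟩).symm
  · -- injective
    rintro ⟨⟨u, v⟩, hu, hv, _⟩ ⟨⟨u', v'⟩, hu', hv', _⟩ hpq
    have h : (1 : Matrix (Fin m) (Fin m) (ZMod 2)) + vecMulVec u v
        = 1 + vecMulVec u' v' := congrArg Subtype.val hpq
    obtain ⟨e1, e2⟩ := vecMulVec_injective hu hv (add_left_cancel h)
    exact Subtype.ext (Prod.ext e1 e2)
  · -- surjective
    rintro ⟨M, hd, hl, hr⟩
    obtain ⟨u, v, hu, hv, huv⟩ := (rank_eq_one_iff' (M - 1)).mp hr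
    have hM : M = 1 + vecMulVec u v := by
      rw [← huv, add_sub_cancel]
    have htri : ∀ i j : Fin m, u i ≠ 0 → v j ≠ 0 → (i : ℕ) < (j : ℕ) := by
      intro i j hui hvj
      by_contra hc
      push_neg at hc
      have hprod : u i * v j = 1 := by
        rw [zmod2_eq_one hui, zmod2_eq_one hvj, one_mul]
      rcases eq_or_lt_of_le hc with heq | hlt
      · have hij : i = j := Fin.ext heq.symm
        subst hij
        have hdi := hd i
        rw [hM] at hdi
        rw [Matrix.add_apply, Matrix.one_apply_eq, vecMulVec_apply, hprod] at hdi
        revert hdi; decide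
      · have h0 := hl i j hlt
        have hne : i ≠ j := by intro h; subst h; omega
        rw [hM] at h0
        simp only [Matrix.add_apply, Matrix.one_apply_ne hne, vecMulVec_apply, hprod,
          zero_add] at h0
        exact one_ne_zero h0
    exact ⟨⟨(u, v), hu, hv, htri⟩, Subtype.ext hM.symm⟩

/-- restriction equivalence for vectors supported strictly below `b` -/
def eU {m : ℕ} (b : Fin m) :
    {u : Fin m → ZMod 2 // u ≠ 0 ∧ ∀ i : Fin m, u i ≠ 0 → (i : ℕ) < (b : ℕ)} ≃
    {f : Fin (b : ℕ) → ZMod 2 // f ≠ 0} where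
  toFun u := ⟨fun j => u.1 ⟨j.1, j.2.trans b.2⟩, by
    intro h
    apply u.2.1
    funext i
    by_cases hi : (i : ℕ) < (b : ℕ)
    · exact congrFun h ⟨i.1, hi⟩
    · by_contra hc
      exact hi (u.2.2 i hc)⟩
  invFun f := ⟨fun i => if h : (i : ℕ) < (b : ℕ) then f.1 ⟨i.1, h⟩ else 0, by
    constructor
    · intro h
      apply f.2
      funext j
      have := congrFun h ⟨j.1, j.2.trans b.2⟩
      simpa [j.2] using this
    · intro i hi
      by_contra hc
      simp [hc] at hi⟩
  left_inv u := by
    apply Subtype.ext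
    funext i
    by_cases hi : (i : ℕ) < (b : ℕ)
    · simp [hi]
    · simp only [hi, dif_neg, not_false_iff]
      by_contra hc
      exact hi (u.2.2 i (Ne.symm hc))
  right_inv f := by
    apply Subtype.ext
    funext j
    simp [j.2]

/-- equivalence for vectors with min-support exactly `b` -/
def eV {m : ℕ} (b : Fin m) :
    {v : Fin m → ZMod 2 // v b = 1 ∧ ∀ j : Fin m, (j : ℕ) < (b : ℕ) → v j = 0} ≃
    (Fin (m - 1 - (b : ℕ)) → ZMod 2) where
  toFun v k := v.1 ⟨k.1 + b.1 + 1, by omega⟩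
  invFun f := ⟨fun i => if h : (b : ℕ) < (i : ℕ) then f ⟨i.1 - b.1 - 1, by omega⟩
      else if (i : ℕ) = (b : ℕ) then 1 else 0, by
    constructor
    · simp
    · intro j hj
      simp [hj, Nat.lt_asymm hj, Nat.ne_of_lt hj]⟩
  left_inv v := by
    apply Subtype.ext
    funext i
    dsimp only
    by_cases h1 : (b : ℕ) < (i : ℕ)
    · rw [dif_pos h1]
      exact congrArg v.1 (Fin.ext (by simp; omega))
    · rw [dif_neg h1]
      by_cases h2 : (i : ℕ) = (b : ℕ)
      · rw [if_pos h2]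
        have hib : i = b := Fin.ext h2
        rw [hib, v.2.1]
      · rw [if_neg h2]
        exact (v.2.2 i (by omega)).symm
  right_inv f := by
    funext k
    dsimp only
    have h1 : (b : ℕ) < k.1 + b.1 + 1 := by omega
    rw [dif_pos h1]
    exact congrArg f (Fin.ext (by simp; omega))

lemma card_D (m : ℕ) :
    Nat.card {p : (Fin m → ZMod 2) × (Fin m → ZMod 2) //
        p.1 ≠ 0 ∧ p.2 ≠ 0 ∧ ∀ i j : Fin m, p.1 i ≠ 0 → p.2 j ≠ 0 → (i : ℕ) < (j : ℕ)} =
    ∑ b ∈ Finset.range m, (2 ^ b - 1) * 2 ^ (m - 1 - b) := by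
  classical
  rw [Nat.card_eq_fintype_card, Fintype.card_subtype]
  -- partition by least index in the support of p.2
  have hpart : (Finset.univ.filter (fun p : (Fin m → ZMod 2) × (Fin m → ZMod 2) =>
        p.1 ≠ 0 ∧ p.2 ≠ 0 ∧ ∀ i j : Fin m, p.1 i ≠ 0 → p.2 j ≠ 0 → (i : ℕ) < (j : ℕ))) =
      Finset.univ.biUnion (fun b : Fin m =>
        Finset.univ.filter (fun p : (Fin m → ZMod 2) × (Fin m → ZMod 2) =>
          (p.1 ≠ 0 ∧ ∀ i : Fin m, p.1 i ≠ 0 → (i : ℕ) < (b : ℕ)) ∧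
          (p.2 b = 1 ∧ ∀ j : Fin m, (j : ℕ) < (b : ℕ) → p.2 j = 0))) := by
    ext p
    simp only [Finset.mem_filter, Finset.mem_biUnion, Finset.mem_univ, true_and]
    constructor
    · rintro ⟨h1, h2, h3⟩
      obtain ⟨j0, hj0⟩ : ∃ j, p.2 j ≠ 0 := by
        by_contra hc; push_neg at hc; exact h2 (funext hc)
      set s := Finset.univ.filter (fun j : Fin m => p.2 j ≠ 0) with hs
      have hne : s.Nonempty := ⟨j0, by simp [hs, hj0]⟩
      refine ⟨s.min' hne, ⟨h1, ?_⟩, ?_, ?_⟩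
      · intro i hi
        exact h3 i _ hi (by
          have := Finset.min'_mem s hne
          simp [hs] at this
          exact this)
      · apply zmod2_eq_one
        have := Finset.min'_mem s hne
        simp [hs] at this
        exact this
      · intro j hj
        by_contra hc
        have hmem : j ∈ s := by simp [hs, hc]
        have := Finset.min'_le s j hmem
        omega
    · rintro ⟨b, ⟨h1, h2⟩, h3, h4⟩
      refine ⟨h1, ?_, ?_⟩
      · intro h
        rw [h] at h3
        exact one_ne_zero h3.symm
      · intro i j hi hj
        have hib := h2 i hi
        have hbj : (b : ℕ) ≤ (j : ℕ) := by
          by_contra hc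
          exact hj (h4 j (by omega))
        omega
  rw [hpart, Finset.card_biUnion]
  · rw [← Fin.sum_univ_eq_sum_range (fun b => (2 ^ b - 1) * 2 ^ (m - 1 - b))]
    apply Finset.sum_congr rfl
    intro b _
    have hsplit : (Finset.univ.filter (fun p : (Fin m → ZMod 2) × (Fin m → ZMod 2) =>
          (p.1 ≠ 0 ∧ ∀ i : Fin m, p.1 i ≠ 0 → (i : ℕ) < (b : ℕ)) ∧
          (p.2 b = 1 ∧ ∀ j : Fin m, (j : ℕ) < (b : ℕ) → p.2 j = 0))) =
        (Finset.univ.filter (fun u : Fin m → ZMod 2 =>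
          u ≠ 0 ∧ ∀ i : Fin m, u i ≠ 0 → (i : ℕ) < (b : ℕ))) ×ˢ
        (Finset.univ.filter (fun v : Fin m → ZMod 2 =>
          v b = 1 ∧ ∀ j : Fin m, (j : ℕ) < (b : ℕ) → v j = 0)) := by
      ext p
      simp [Finset.mem_product, and_assoc]
    rw [hsplit, Finset.card_product]
    have hU : (Finset.univ.filter (fun u : Fin m → ZMod 2 =>
          u ≠ 0 ∧ ∀ i : Fin m, u i ≠ 0 → (i : ℕ) < (b : ℕ))).card = 2 ^ (b : ℕ) - 1 := by
      rw [← Fintype.card_subtype, Fintype.card_congr (eU b)]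
      have h1 : Fintype.card {f : Fin (b : ℕ) → ZMod 2 // f ≠ 0} =
          Fintype.card (Fin (b : ℕ) → ZMod 2) - Fintype.card {f : Fin (b : ℕ) → ZMod 2 // f = 0} :=
        Fintype.card_subtype_compl _
      rw [h1, Fintype.card_subtype_eq, Fintype.card_fun, ZMod.card, Fintype.card_fin]
    have hV : (Finset.univ.filter (fun v : Fin m → ZMod 2 =>
          v b = 1 ∧ ∀ j : Fin m, (j : ℕ) < (b : ℕ) → v j = 0)).card = 2 ^ (m - 1 - (b : ℕ)) := by
      rw [← Fintype.card_subtype, Fintype.card_congr (eV b), Fintype.card_fun, ZMod.card,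
        Fintype.card_fin]
    rw [hU, hV]
  · -- disjointness
    intro b _ b' _ hbb'
    apply Finset.disjoint_left.mpr
    intro p hp hp'
    simp only [Finset.mem_filter, Finset.mem_univ, true_and] at hp hp'
    apply hbb'
    obtain ⟨-, h3, h4⟩ := hp
    obtain ⟨-, h3', h4'⟩ := hp'
    have e1 : ¬ (b : ℕ) < (b' : ℕ) := fun h => by
      have hz := h4' b h
      rw [h3] at hz
      exact one_ne_zero hz
    have e2 : ¬ (b' : ℕ) < (b : ℕ) := fun h => by
      have hz := h4 b' h
      rw [h3'] at hz
      exact one_ne_zero hz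
    exact Fin.ext (by omega)

lemma sum_recursion (k : ℕ) :
    ∑ b ∈ Finset.range (k + 1), (2 ^ b - 1) * 2 ^ (k - b) =
    2 * (∑ b ∈ Finset.range k, (2 ^ b - 1) * 2 ^ (k - 1 - b)) + (2 ^ k - 1) := by
  rw [Finset.sum_range_succ]
  have h1 : ∀ b ∈ Finset.range k,
      (2 ^ b - 1) * 2 ^ (k - b) = 2 * ((2 ^ b - 1) * 2 ^ (k - 1 - b)) := by
    intro b hb
    rw [Finset.mem_range] at hb
    have h : k - b = (k - 1 - b) + 1 := by omega
    rw [h, pow_succ]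
    ring
  rw [Finset.sum_congr rfl h1, ← Finset.mul_sum]
  have h2 : k - k = 0 := by omega
  rw [h2, pow_zero, mul_one]

/-- For `n ≥ 3`, let `T(m)` denote the number of `m×m` upper unitriangular matrices `M`
over `F_2` with `rank(M − I) = 1`.  Then `T(n) = 2·T(n−1) + 2^{n−1} − 1`. -/
theorem unitriangular_transvection_count_recursion
    (n : ℕ) (hn : 3 ≤ n) (T : ℕ → ℕ)
    (hT : ∀ m : ℕ, T m = Nat.card {M : Matrix (Fin m) (Fin m) (ZMod 2) |
        (∀ i, M i i = 1) ∧ (∀ i j : Fin m, (j : ℕ) < (i : ℕ) → M i j = 0) ∧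
        (M - 1).rank = 1}) :
    T n = 2 * T (n - 1) + 2 ^ (n - 1) - 1 := by
  obtain ⟨k, rfl⟩ : ∃ k, n = k + 1 := ⟨n - 1, by omega⟩
  rw [hT, hT, card_S_eq_card_D, card_D, card_S_eq_card_D, card_D]
  have hk : k + 1 - 1 = k := by omega
  simp only [hk]
  rw [sum_recursion k]
  have hp : 1 ≤ 2 ^ k := Nat.one_le_two_pow
  omega
end

section
/- Let G be a finite group acting transitively on a finite set Ω and let Σ be a system of imprimitivity for G on Ω (so all blocks have the same size). Let g ∈ G be an element such that: (i) g does not fix every block of Σ setwise; (ii) g fixes at most one block of Σ pointwise; and (iii) for every block B ∈ Σ that g fixes setwise but not pointwise, 3·|Fix_B(g)| ≤ |B|. Then 3·|Fix_Ω(g)| ≤ |Ω|. -/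
open Pointwise

/-- Let `G` act transitively on a finite set `Ω` and let `𝒮` be a system of imprimitivity
for `G` on `Ω`.  Let `g ∈ G` be such that: (i) `g` does not fix every block of `𝒮` setwise;
(ii) `g` fixes at most one block of `𝒮` pointwise; (iii) for every block `B ∈ 𝒮` fixed by
`g` setwise but not pointwise, `3·|Fix_B(g)| ≤ |B|`.  Then `3·|Fix_Ω(g)| ≤ |Ω|`. -/
theorem fixed_points_le_third_from_blocks
    {G Ω : Type*} [Group G] [Finite Ω] [MulAction G Ω]
    [MulAction.IsPretransitive G Ω]
    (𝒮 : Set (Set Ω)) (hne : ∅ ∉ 𝒮)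
    (hpart : ∀ ω : Ω, ∃! B, B ∈ 𝒮 ∧ ω ∈ B)
    (hinv : ∀ (x : G), ∀ B ∈ 𝒮, x • B ∈ 𝒮)
    (g : G)
    (hi : ¬ ∀ B ∈ 𝒮, g • B = B)
    (hii : Nat.card {B : Set Ω | B ∈ 𝒮 ∧ ∀ ω ∈ B, g • ω = ω} ≤ 1)
    (hiii : ∀ B ∈ 𝒮, g • B = B → (∃ ω ∈ B, g • ω ≠ ω) →
      3 * Nat.card {ω : Ω | ω ∈ B ∧ g • ω = ω} ≤ Nat.card B) :
    3 * Nat.card {ω : Ω | g • ω = ω} ≤ Nat.card Ω := by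
  classical
  have _inst : Fintype Ω := Fintype.ofFinite Ω
  -- the block of a point
  set blk : Ω → Set Ω := fun ω => (hpart ω).choose with hblk_def
  have hblk_mem : ∀ ω, blk ω ∈ 𝒮 := fun ω => (hpart ω).choose_spec.1.1
  have hblk_self : ∀ ω, ω ∈ blk ω := fun ω => (hpart ω).choose_spec.1.2
  have hblk_uniq : ∀ ω, ∀ B ∈ 𝒮, ω ∈ B → B = blk ω :=
    fun ω B hB hω => (hpart ω).choose_spec.2 B ⟨hB, hω⟩
  have hmem_iff : ∀ B ∈ 𝒮, ∀ ω, (ω ∈ B ↔ blk ω = B) := by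
    intro B hB ω
    constructor
    · intro h; exact (hblk_uniq ω B hB h).symm
    · rintro rfl; exact hblk_self ω
  have hSfin : 𝒮.Finite := Set.toFinite 𝒮
  set T : Finset (Set Ω) := hSfin.toFinset with hT_def
  have hT : ∀ B, B ∈ T ↔ B ∈ 𝒮 := fun B => hSfin.mem_toFinset
  -- counting helper
  have hcard : ∀ p : Ω → Prop, Nat.card {ω | p ω} = (Finset.univ.filter p).card := by
    intro p
    rw [Nat.card_coe_set_eq, Set.ncard_eq_toFinset_card']
    congr 1; ext ω; simp
  have hcardB : ∀ B ∈ 𝒮, Nat.card B = (Finset.univ.filter (fun ω => blk ω = B)).card := by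
    intro B hB
    have : Nat.card B = Nat.card {ω | ω ∈ B} := rfl
    rw [this, hcard]
    congr 1
    apply Finset.filter_congr
    intro ω _
    simpa using hmem_iff B hB ω
  -- fixed points lie in setwise-fixed blocks
  have hfixblk : ∀ ω : Ω, g • ω = ω → g • blk ω = blk ω := by
    intro ω h
    have h1 : g • blk ω ∈ 𝒮 := hinv g _ (hblk_mem ω)
    have h2 : ω ∈ g • blk ω := by
      have := Set.smul_mem_smul_set (a := g) (hblk_self ω)
      rwa [h] at this
    exact hblk_uniq ω _ h1 h2
  -- pointwise fixed implies setwise fixed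
  have hpq : ∀ B : Set Ω, (∀ ω ∈ B, g • ω = ω) → g • B = B := by
    intro B h
    ext ω
    constructor
    · rintro ⟨ω', hω', rfl⟩
      show g • ω' ∈ B
      rw [h ω' hω']; exact hω'
    · intro hω
      exact ⟨ω, hω, h ω hω⟩
  -- a moved block
  push_neg at hi
  obtain ⟨B₀, hB₀S, hB₀g⟩ := hi
  set b : ℕ := Nat.card B₀ with hb_def
  -- all blocks have the same size
  have hnonempty : ∀ B ∈ 𝒮, B.Nonempty := by
    intro B hB
    rcases Set.eq_empty_or_nonempty B with h | h
    · exact absurd (h ▸ hB) hne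
    · exact h
  have hsize : ∀ B ∈ 𝒮, Nat.card B = b := by
    intro B hB
    obtain ⟨ω, hω⟩ := hnonempty B hB
    obtain ⟨ω₀, hω₀⟩ := hnonempty B₀ hB₀S
    obtain ⟨x, hx⟩ := MulAction.exists_smul_eq G ω₀ ω
    have hxB : x • B₀ = B := by
      have h1 : x • B₀ ∈ 𝒮 := hinv x _ hB₀S
      have h2 : ω ∈ x • B₀ := hx ▸ Set.smul_mem_smul_set hω₀
      rw [hblk_uniq ω _ h1 h2, hblk_uniq ω B hB hω]
    calc Nat.card B = Nat.card (x • B₀ : Set Ω) := by rw [hxB]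
      _ = b := by
        rw [hb_def, Nat.card_coe_set_eq, Nat.card_coe_set_eq]
        show ((x • ·) '' B₀).ncard = B₀.ncard
        exact Set.ncard_image_of_injective _ (MulAction.injective x)
  -- the fiber decomposition of Ω and of the fixed-point set
  have hΩsum : Nat.card Ω = ∑ B ∈ T, Nat.card B := by
    rw [Nat.card_eq_fintype_card, ← Finset.card_univ]
    rw [Finset.card_eq_sum_card_fiberwise (f := blk) (t := T)
      (fun ω _ => (hT _).2 (hblk_mem ω))]
    exact Finset.sum_congr rfl fun B hB => (hcardB B ((hT B).1 hB)).symm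
  have hFsum : Nat.card {ω : Ω | g • ω = ω}
      = ∑ B ∈ T, Nat.card {ω : Ω | ω ∈ B ∧ g • ω = ω} := by
    rw [hcard]
    rw [Finset.card_eq_sum_card_fiberwise (f := blk) (t := T)
      (fun ω _ => (hT _).2 (hblk_mem ω))]
    refine Finset.sum_congr rfl fun B hB => ?_
    rw [hcard]
    congr 1
    rw [Finset.filter_filter]
    ext ω
    simp only [Finset.mem_filter, Finset.mem_univ, true_and, Set.mem_setOf_eq]
    rw [hmem_iff B ((hT B).1 hB) ω]
    tauto
  -- split T into moved / pointwise-fixed / other-fixed blocks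
  set p : Set Ω → Prop := fun B => g • B = B with hp_def
  set q : Set Ω → Prop := fun B => ∀ ω ∈ B, g • ω = ω with hq_def
  set Tm : Finset (Set Ω) := T.filter (fun B => ¬ p B) with hTm_def
  set Tp : Finset (Set Ω) := (T.filter p).filter q with hTp_def
  set Tf : Finset (Set Ω) := (T.filter p).filter (fun B => ¬ q B) with hTf_def
  -- moved blocks contribute nothing
  have hmoved : ∀ B ∈ Tm, Nat.card {ω : Ω | ω ∈ B ∧ g • ω = ω} = 0 := by
    intro B hB
    rw [hTm_def, Finset.mem_filter] at hB
    obtain ⟨hBT, hBp⟩ := hB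
    have : {ω : Ω | ω ∈ B ∧ g • ω = ω} = ∅ := by
      ext ω
      simp only [Set.mem_setOf_eq, Set.mem_empty_iff_false, iff_false, not_and]
      intro hωB hωg
      exact hBp (((hblk_uniq ω B ((hT B).1 hBT) hωB)) ▸ hfixblk ω hωg)
    rw [this]
    simp
  -- pointwise-fixed blocks contribute b each
  have hptwise : ∀ B ∈ Tp, Nat.card {ω : Ω | ω ∈ B ∧ g • ω = ω} = b := by
    intro B hB
    rw [hTp_def, Finset.mem_filter, Finset.mem_filter] at hB
    obtain ⟨⟨hBT, _⟩, hBq⟩ := hB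
    have : {ω : Ω | ω ∈ B ∧ g • ω = ω} = B := by
      ext ω
      simp only [Set.mem_setOf_eq]
      exact ⟨fun h => h.1, fun h => ⟨h, hBq ω h⟩⟩
    rw [this]
    exact hsize B ((hT B).1 hBT)
  -- other fixed blocks contribute at most b/3
  have hother : ∀ B ∈ Tf, 3 * Nat.card {ω : Ω | ω ∈ B ∧ g • ω = ω} ≤ b := by
    intro B hB
    rw [hTf_def, Finset.mem_filter, Finset.mem_filter] at hB
    obtain ⟨⟨hBT, hBp⟩, hBq⟩ := hB
    have hBS := (hT B).1 hBT
    rw [← hsize B hBS]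
    apply hiii B hBS hBp
    simp only [hq_def] at hBq
    push_neg at hBq
    exact hBq
  -- at most one pointwise-fixed block
  have hTp1 : Tp.card ≤ 1 := by
    have hcoe : (↑Tp : Set (Set Ω)) = {B : Set Ω | B ∈ 𝒮 ∧ ∀ ω ∈ B, g • ω = ω} := by
      ext B
      simp only [hTp_def, Finset.coe_filter, Set.mem_setOf_eq, Finset.mem_filter, hT]
      constructor
      · rintro ⟨⟨h1, _⟩, h3⟩; exact ⟨h1, h3⟩
      · rintro ⟨h1, h3⟩; exact ⟨⟨h1, hpq B h3⟩, h3⟩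
    calc Tp.card = (↑Tp : Set (Set Ω)).ncard := (Set.ncard_coe_finset Tp).symm
      _ = Nat.card {B : Set Ω | B ∈ 𝒮 ∧ ∀ ω ∈ B, g • ω = ω} := by
          rw [hcoe, Nat.card_coe_set_eq]
      _ ≤ 1 := hii
  -- at least two moved blocks
  have hTm2 : 2 ≤ Tm.card := by
    have h1 : B₀ ∈ Tm := by
      rw [hTm_def, Finset.mem_filter]
      exact ⟨(hT B₀).2 hB₀S, hB₀g⟩
    have h2 : g • B₀ ∈ Tm := by
      rw [hTm_def, Finset.mem_filter]
      refine ⟨(hT _).2 (hinv g _ hB₀S), fun h => hB₀g ?_⟩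
      exact smul_left_cancel g h
    have h3 : B₀ ≠ g • B₀ := fun h => hB₀g h.symm
    calc 2 = ({B₀, g • B₀} : Finset (Set Ω)).card := (Finset.card_pair h3).symm
      _ ≤ Tm.card := Finset.card_le_card (by
          intro B hB
          simp only [Finset.mem_insert, Finset.mem_singleton] at hB
          rcases hB with rfl | rfl
          · exact h1
          · exact h2)
  -- assemble
  have hsplit : ∀ f : Set Ω → ℕ,
      ∑ B ∈ T, f B = ∑ B ∈ Tp, f B + ∑ B ∈ Tf, f B + ∑ B ∈ Tm, f B := by
    intro f
    rw [hTp_def, hTf_def, hTm_def]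
    rw [← Finset.sum_filter_add_sum_filter_not T p f]
    rw [← Finset.sum_filter_add_sum_filter_not (T.filter p) q f]
  have hΩ : Nat.card Ω = (Tp.card + Tf.card + Tm.card) * b := by
    rw [hΩsum, hsplit]
    have e1 : ∑ B ∈ Tp, Nat.card B = Tp.card * b := by
      rw [Finset.sum_congr rfl (fun B hB => hsize B ((hT B).1
        (Finset.mem_filter.1 (Finset.mem_filter.1 hB).1).1))]
      simp [mul_comm]; exact Or.inl rfl
    have e2 : ∑ B ∈ Tf, Nat.card B = Tf.card * b := by
      rw [Finset.sum_congr rfl (fun B hB => hsize B ((hT B).1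
        (Finset.mem_filter.1 (Finset.mem_filter.1 hB).1).1))]
      simp [mul_comm]; exact Or.inl rfl
    have e3 : ∑ B ∈ Tm, Nat.card B = Tm.card * b := by
      rw [Finset.sum_congr rfl (fun B hB => hsize B ((hT B).1
        (Finset.mem_filter.1 hB).1))]
      simp [mul_comm]; exact Or.inl rfl
    rw [e1, e2, e3]
    ring
  have hF : 3 * Nat.card {ω : Ω | g • ω = ω} ≤ 3 * Tp.card * b + Tf.card * b := by
    have e1 : ∑ B ∈ Tp, Nat.card {ω : Ω | ω ∈ B ∧ g • ω = ω} = Tp.card * b := by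
      rw [Finset.sum_congr rfl hptwise]; simp [mul_comm]
    have e3 : ∑ B ∈ Tm, Nat.card {ω : Ω | ω ∈ B ∧ g • ω = ω} = 0 :=
      Finset.sum_eq_zero hmoved
    have hTfsum : 3 * ∑ B ∈ Tf, Nat.card {ω : Ω | ω ∈ B ∧ g • ω = ω}
        ≤ Tf.card * b := by
      rw [Finset.mul_sum]
      calc ∑ B ∈ Tf, 3 * Nat.card {ω : Ω | ω ∈ B ∧ g • ω = ω}
          ≤ ∑ B ∈ Tf, b := Finset.sum_le_sum hother
        _ = Tf.card * b := by simp [mul_comm]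
    rw [hFsum, hsplit, e1, e3, add_zero]
    nlinarith [hTfsum]
  rw [hΩ]
  calc 3 * Nat.card {ω : Ω | g • ω = ω} ≤ 3 * Tp.card * b + Tf.card * b := hF
    _ = (3 * Tp.card + Tf.card) * b := by ring
    _ ≤ (Tp.card + Tf.card + Tm.card) * b :=
        Nat.mul_le_mul_right _ (by omega)
end
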